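/- arXiv:0707.4197 — 12 statements merged into one kernel-verified Lean document; each statement's English description precedes it below -/
import Mathlib

section
/- Let φ: R → S be a local homomorphism of Noetherian local rings satisfying condition (†). If M and N are S-modules with N finitely generated over S, then every R-linear map M → N is S-linear; i.e., Hom_R(M,N) = Hom_S(M,N). -/
theorem stmt_1 (R S : Type*) [CommRing R] [CommRing S]
    [IsNoetherianRing R] [IsNoetherianRing S] [IsLocalRing R] [IsLocalRing S]
    [Algebra R S] [IsLocalHom (algebraMap R S)]
    (h1 : (IsLocalRing.maximalIdeal R).map (algebraMap R S) = IsLocalRing.maximalIdeal S)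
    (h2 : ∀ s : S, ∃ r : R, s - algebraMap R S r ∈ IsLocalRing.maximalIdeal S)
    (M N : Type*) [AddCommGroup M] [AddCommGroup N]
    [Module S M] [Module S N] [Module R M] [Module R N]
    [IsScalarTower R S M] [IsScalarTower R S N]
    [Module.Finite S N] :
    ∀ (f : M →ₗ[R] N) (s : S) (x : M), f (s • x) = s • f x := by
  intro f s x
  set n := IsLocalRing.maximalIdeal S with hn
  -- K : span of all defects
  set K : Submodule S N := Submodule.span S {y | ∃ s : S, ∃ m : M, y = f (s • m) - s • f m}
    with hK
  -- defect of algebraMap elements is zero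
  have hphi : ∀ (r : R) (y : M), f (algebraMap R S r • y) = algebraMap R S r • f y := by
    intro r y
    rw [algebraMap_smul, f.map_smul, algebraMap_smul]
  -- claim: for t ∈ n, all defects with scalar t lie in n • K
  have claim : ∀ t ∈ n, ∀ y : M, f (t • y) - t • f y ∈ n • K := by
    intro t ht
    rw [← h1, Ideal.map] at ht
    -- ht : t ∈ span of image
    refine Submodule.span_induction ?_ ?_ ?_ ?_ ht
    · rintro _ ⟨a, ha, rfl⟩ y
      rw [hphi a y, sub_self]
      exact Submodule.zero_mem _
    · intro y
      rw [zero_smul, zero_smul, f.map_zero, sub_zero]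
      exact Submodule.zero_mem _
    · intro t₁ t₂ _ _ ih1 ih2 y
      have : f ((t₁ + t₂) • y) - (t₁ + t₂) • f y
          = (f (t₁ • y) - t₁ • f y) + (f (t₂ • y) - t₂ • f y) := by
        rw [add_smul, add_smul]
        simp only [map_add]
        abel
      rw [this]
      exact Submodule.add_mem _ (ih1 y) (ih2 y)
    · intro c t ht' ih y
      have ht'' : t ∈ n := by
        rw [← h1, Ideal.map]
        exact ht'
      have : f ((c • t) • y) - (c • t) • f y
          = (f (t • (c • y)) - t • f (c • y)) + t • (f (c • y) - c • f y) := by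
        rw [smul_eq_mul, mul_comm, mul_smul, mul_smul, smul_sub]
        abel
      rw [this]
      refine Submodule.add_mem _ (ih (c • y)) ?_
      exact Submodule.smul_mem_smul ht''
        (Submodule.subset_span ⟨c, y, rfl⟩)
  -- K ≤ n • K
  have hle : K ≤ n • K := by
    rw [hK, Submodule.span_le]
    rintro _ ⟨s, y, rfl⟩
    obtain ⟨r, hr⟩ := h2 s
    have : f (s • y) - s • f y
        = f ((s - algebraMap R S r) • y) - (s - algebraMap R S r) • f y := by
      rw [sub_smul, sub_smul]
      simp only [map_sub, hphi]
      abel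
    rw [this]
    exact claim _ hr y
  have hfg : K.FG := (isNoetherian_def.mp inferInstance) K
  have hbot : K = ⊥ :=
    Submodule.eq_bot_of_le_smul_of_le_jacobson_bot n K hfg hle
      (by rw [IsLocalRing.jacobson_eq_maximalIdeal ⊥ bot_ne_top])
  have : f (s • x) - s • f x ∈ K := Submodule.subset_span ⟨s, x, rfl⟩
  rw [hbot, Submodule.mem_bot, sub_eq_zero] at this
  exact this
end

section
/- Let φ: R → S be a local homomorphism of Noetherian local rings satisfying condition (†), and let M be a finitely generated S-module. Then M is indecomposable as an R-module if and only if M is indecomposable as an S-module. -/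
open IsLocalRing

open IsLocalRing in
lemma krull_bot {S : Type*} [CommRing S] [IsNoetherianRing S] [IsLocalRing S]
    (M : Type*) [AddCommGroup M] [Module S M] [Module.Finite S M] (x : M)
    (hx : ∀ k : ℕ, x ∈ (maximalIdeal S ^ k • ⊤ : Submodule S M)) : x = 0 := by
  obtain ⟨n, π, hπ⟩ := Module.Finite.exists_fin' S M
  let e := π.quotKerEquivOfSurjective hπ
  set y := e.symm x with hy
  have hxy : e y = x := e.apply_symm_apply x
  have hyk : ∀ k : ℕ, y ∈ (maximalIdeal S ^ k • ⊤ : Submodule S ((Fin n → S) ⧸ LinearMap.ker π)) := by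
    intro k
    have hmap : (maximalIdeal S ^ k • ⊤ : Submodule S ((Fin n → S) ⧸ LinearMap.ker π)).map
        (e : _ →ₗ[S] M) = (maximalIdeal S ^ k • ⊤ : Submodule S M) := by
      rw [Submodule.map_smul'']
      congr 1
      rw [Submodule.map_top, LinearEquiv.range]
    have : x ∈ (maximalIdeal S ^ k • ⊤ : Submodule S ((Fin n → S) ⧸ LinearMap.ker π)).map
        (e : _ →ₗ[S] M) := by rw [hmap]; exact hx k
    obtain ⟨y', hy', hyx⟩ := this
    have : y' = y := by
      apply e.injective
      rw [hxy]; exact hyx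
    rwa [← this]
  have hbot : (⨅ k : ℕ, (maximalIdeal S ^ k • ⊤ :
      Submodule S ((Fin n → S) ⧸ LinearMap.ker π))) = ⊥ :=
    Ideal.iInf_pow_smul_eq_bot_of_isLocalRing (I := maximalIdeal S)
      (IsLocalRing.maximalIdeal.isMaximal S).ne_top
  have : y ∈ (⊥ : Submodule S ((Fin n → S) ⧸ LinearMap.ker π)) := by
    rw [← hbot]; exact Submodule.mem_iInf _ |>.mpr hyk
  rw [Submodule.mem_bot] at this
  rw [← hxy, this, map_zero]


lemma key_lin (R S : Type*) [CommRing R] [CommRing S]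
    [IsNoetherianRing S] [IsLocalRing S] [IsLocalRing R]
    [Algebra R S]
    (h1 : (maximalIdeal R).map (algebraMap R S) = maximalIdeal S)
    (h2 : ∀ s : S, ∃ r : R, s - algebraMap R S r ∈ maximalIdeal S)
    (M : Type*) [AddCommGroup M] [Module S M] [Module R M] [IsScalarTower R S M]
    [Module.Finite S M]
    (f : M →ₗ[R] M) (s : S) (x : M) : f (s • x) = s • f x := by
  have claim : ∀ k : ℕ, ∀ (s : S) (x : M),
      f (s • x) - s • f x ∈ (maximalIdeal S ^ k • ⊤ : Submodule S M) := by
    intro k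
    induction k with
    | zero => intro s x; simp [Ideal.one_eq_top]
    | succ k ih =>
      have hmem : ∀ t ∈ maximalIdeal S, ∀ (s : S) (x : M),
          f ((t * s) • x) - (t * s) • f x ∈ (maximalIdeal S ^ (k + 1) • ⊤ : Submodule S M) := by
        intro t ht
        rw [← h1, Ideal.map, Ideal.span] at ht
        refine Submodule.span_induction ?_ ?_ ?_ ?_ ht
        · rintro _ ⟨r, hr, rfl⟩ s x
          have e1 : (algebraMap R S r * s) • x = r • (s • x) := by
            rw [mul_smul, algebraMap_smul]
          have e2 : (algebraMap R S r * s) • f x = r • (s • f x) := by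
            rw [mul_smul, algebraMap_smul]
          rw [e1, e2, map_smul, ← algebraMap_smul S r, ← algebraMap_smul S r (s • f x),
            ← smul_sub]
          have hr' : algebraMap R S r ∈ maximalIdeal S := by
            rw [← h1]; exact Ideal.mem_map_of_mem _ hr
          have heq : (maximalIdeal S ^ (k+1) • ⊤ : Submodule S M)
              = maximalIdeal S • (maximalIdeal S ^ k • ⊤ : Submodule S M) := by
            rw [pow_succ', ← smul_eq_mul, Submodule.smul_assoc]
          rw [heq]
          exact Submodule.smul_mem_smul hr' (ih s x)
        · intro s x; simp
        · intro t t' _ _ hpt hpt' s x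
          have e1 : ((t + t') * s) • x = (t * s) • x + (t' * s) • x := by
            rw [add_mul, add_smul]
          have e2 : ((t + t') * s) • f x = (t * s) • f x + (t' * s) • f x := by
            rw [add_mul, add_smul]
          rw [e1, e2, map_add]
          have := Submodule.add_mem _ (hpt s x) (hpt' s x)
          convert this using 1
          abel
        · intro c t _ hpt s x
          have e0 : c • t * s = t * (c * s) := by rw [smul_eq_mul]; ring
          rw [e0]
          exact hpt (c * s) x
      intro s x
      obtain ⟨r, hr⟩ := h2 s
      set t := s - algebraMap R S r with hts
      have hs : s = algebraMap R S r + t := by rw [hts]; ring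
      have key : f (s • x) - s • f x = (f (t • x) - t • f x)
          + (f (algebraMap R S r • x) - algebraMap R S r • f x) := by
        conv_lhs => rw [hs]
        rw [add_smul, map_add, add_smul]
        abel
      rw [key]
      have h0 : f (algebraMap R S r • x) - algebraMap R S r • f x = 0 := by
        rw [algebraMap_smul, algebraMap_smul, map_smul, sub_self]
      rw [h0, add_zero]
      simpa using hmem t hr 1 x
  have hx : f (s • x) - s • f x = 0 := krull_bot M _ fun k => claim k s x
  rw [sub_eq_zero] at hx
  exact hx

theorem stmt_2 (R S : Type*) [CommRing R] [CommRing S]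
    [IsNoetherianRing R] [IsNoetherianRing S] [IsLocalRing R] [IsLocalRing S]
    [Algebra R S] [IsLocalHom (algebraMap R S)]
    (h1 : (IsLocalRing.maximalIdeal R).map (algebraMap R S) = IsLocalRing.maximalIdeal S)
    (h2 : ∀ s : S, ∃ r : R, s - algebraMap R S r ∈ IsLocalRing.maximalIdeal S)
    (M : Type*) [AddCommGroup M] [Module S M] [Module R M] [IsScalarTower R S M]
    [Module.Finite S M] :
    (¬ ∃ (A B : Submodule R M), IsCompl A B ∧ A ≠ ⊥ ∧ B ≠ ⊥) ↔
      (¬ ∃ (A B : Submodule S M), IsCompl A B ∧ A ≠ ⊥ ∧ B ≠ ⊥) := by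
  constructor
  · -- R-indecomposable → S-indecomposable
    intro hR
    rintro ⟨A, B, hc, hA, hB⟩
    apply hR
    refine ⟨A.restrictScalars R, B.restrictScalars R, ?_, ?_, ?_⟩
    · constructor
      · rw [disjoint_iff]
        have := hc.inf_eq_bot
        rw [eq_bot_iff]
        intro x hx
        have : x ∈ A ⊓ B := hx
        rw [hc.inf_eq_bot] at this
        simpa using this
      · rw [codisjoint_iff, eq_top_iff]
        intro x _
        have hx : x ∈ A ⊔ B := by rw [hc.sup_eq_top]; trivial
        obtain ⟨a, ha, b, hb, rfl⟩ := Submodule.mem_sup.mp hx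
        exact Submodule.add_mem_sup (show _ ∈ A.restrictScalars R from ha) (show _ ∈ B.restrictScalars R from hb)
    · simpa [Submodule.restrictScalars_eq_bot_iff] using hA
    · simpa [Submodule.restrictScalars_eq_bot_iff] using hB
  · -- S-indecomposable → R-indecomposable
    intro hS
    rintro ⟨A, B, hc, hA, hB⟩
    apply hS
    let p := A.projectionOnto B hc
    let e : M →ₗ[R] M := A.subtype.comp p
    have heA : ∀ x ∈ A, e x = x := by
      intro x hx
      simp only [e, LinearMap.comp_apply, p]
      rw [Submodule.linearProjOfIsCompl_apply_left hc ⟨x, hx⟩]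
      rfl
    have heB : ∀ x ∈ B, e x = 0 := by
      intro x hx
      simp only [e, LinearMap.comp_apply, p]
      rw [Submodule.linearProjOfIsCompl_apply_right hc ⟨x, hx⟩]
      simp
    have heMem : ∀ x, e x ∈ A := fun x => (p x).2
    have hee : ∀ x, e (e x) = e x := fun x => heA _ (heMem x)
    let e' : M →ₗ[S] M :=
      { toFun := e
        map_add' := e.map_add
        map_smul' := fun s x => key_lin R S h1 h2 M e s x }
    have he'e : ∀ x, e' x = e x := fun _ => rfl
    refine ⟨LinearMap.range e', LinearMap.ker e', ?_, ?_, ?_⟩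
    · constructor
      · rw [disjoint_iff, eq_bot_iff]
        rintro x ⟨hx1, hx2⟩
        obtain ⟨y, rfl⟩ := hx1
        simp only [SetLike.mem_coe, LinearMap.mem_ker] at hx2
        have : e' (e' y) = e' y := hee y
        rw [hx2] at this
        simp [← this]
      · rw [codisjoint_iff, eq_top_iff]
        intro x _
        have hxk : x - e' x ∈ LinearMap.ker e' := by
          rw [LinearMap.mem_ker, map_sub, he'e, he'e, hee, sub_self]
        have : x = e' x + (x - e' x) := by abel
        rw [this]
        exact Submodule.add_mem_sup (LinearMap.mem_range_self e' x) hxk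
    · obtain ⟨a, haA, ha0⟩ := Submodule.ne_bot_iff A |>.mp hA
      rw [Submodule.ne_bot_iff]
      exact ⟨a, ⟨a, heA a haA⟩, ha0⟩
    · obtain ⟨b, hbB, hb0⟩ := Submodule.ne_bot_iff B |>.mp hB
      rw [Submodule.ne_bot_iff]
      exact ⟨b, by rw [LinearMap.mem_ker, he'e, heB b hbB], hb0⟩
end

section
/- Let φ: R → S be a local homomorphism of Noetherian local rings satisfying condition (†). Let N be a finitely generated S-module and V an R-submodule of N. Then V admits at most one S-module structure compatible with its R-module structure; concretely, if (s,v) ↦ s∘v is an S-module structure on V compatible with the R-action inherited from N, then s∘v = s·v (the N-multiplication) for all s ∈ S, v ∈ V. -/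
theorem stmt_3 (R S : Type*) [CommRing R] [CommRing S]
    [IsNoetherianRing R] [IsNoetherianRing S] [IsLocalRing R] [IsLocalRing S]
    [Algebra R S] [IsLocalHom (algebraMap R S)]
    (h1 : (IsLocalRing.maximalIdeal R).map (algebraMap R S) = IsLocalRing.maximalIdeal S)
    (h2 : ∀ s : S, ∃ r : R, s - algebraMap R S r ∈ IsLocalRing.maximalIdeal S)
    (N : Type*) [AddCommGroup N] [Module S N] [Module R N] [IsScalarTower R S N]
    [Module.Finite S N]
    (V : Submodule R N)
    -- an S-module structure `smul` on V, compatible with the R-action inherited from N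
    (smul : S → N → N)
    (hmem : ∀ s, ∀ v ∈ V, smul s v ∈ V)
    (hone : ∀ v ∈ V, smul 1 v = v)
    (hmul : ∀ s t, ∀ v ∈ V, smul (s * t) v = smul s (smul t v))
    (haddv : ∀ s, ∀ v ∈ V, ∀ w ∈ V, smul s (v + w) = smul s v + smul s w)
    (hadds : ∀ s t, ∀ v ∈ V, smul (s + t) v = smul s v + smul t v)
    (hzero : ∀ v ∈ V, smul 0 v = 0)
    (hzerov : ∀ s, smul s 0 = 0)
    (hcompat : ∀ r : R, ∀ v ∈ V, smul (algebraMap R S r) v = r • v) :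
    ∀ s : S, ∀ v ∈ V, smul s v = s • v := by
  set φ := algebraMap R S with hφ
  set nS := IsLocalRing.maximalIdeal S with hnS
  set gen : Set N := {x | ∃ t, ∃ w ∈ V, x = smul t w - t • w} with hgen
  set W : Submodule S N := Submodule.span S gen with hW
  -- Step 1: for m in the maximal ideal, the defect lies in nS • W
  have key : ∀ m ∈ nS, ∀ w ∈ V, smul m w - m • w ∈ nS • W := by
    intro m hm w hw
    rw [← h1, Ideal.map] at hm
    obtain ⟨k, f, g, hsum⟩ := Submodule.mem_span_set'.mp hm
    have base : ∀ i : Fin k, smul (f i • (g i : S)) w - (f i • (g i : S)) • w ∈ nS • W := by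
      intro i
      obtain ⟨r, hr, hgr⟩ := (g i).2
      have h1' : f i • (g i : S) = φ r * f i := by
        rw [smul_eq_mul, mul_comm, hgr]
      have hfw : smul (f i) w ∈ V := hmem _ _ hw
      have e1 : smul (f i • (g i : S)) w = φ r • smul (f i) w := by
        rw [h1', hmul _ _ _ hw, hcompat r _ hfw, algebraMap_smul]
      have e2 : (f i • (g i : S)) • w = φ r • (f i • w) := by
        rw [h1', mul_smul]
      rw [e1, e2, ← smul_sub]
      refine Submodule.smul_mem_smul ?_ ?_
      · exact h1 ▸ Ideal.mem_map_of_mem _ hr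
      · exact Submodule.subset_span ⟨f i, w, hw, rfl⟩
    rw [← hsum]
    clear hsum hm
    induction (Finset.univ : Finset (Fin k)) using Finset.induction_on with
    | empty =>
      simp only [Finset.sum_empty, hzero _ hw, zero_smul, sub_zero]
      exact Submodule.zero_mem _
    | @insert a t hx ih =>
      rw [Finset.sum_insert hx, hadds _ _ _ hw, add_smul]
      set A := f a • (g a : S)
      set B := ∑ i ∈ t, f i • (g i : S)
      have : smul A w + smul B w - (A • w + B • w) =
          (smul A w - A • w) + (smul B w - B • w) := by abel
      rw [this]
      exact Submodule.add_mem _ (base a) ih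
  -- Step 2: for arbitrary s, the defect lies in nS • W
  have key2 : ∀ t : S, ∀ w ∈ V, smul t w - t • w ∈ nS • W := by
    intro t w hw
    obtain ⟨r, hr⟩ := h2 t
    have ht : t = (t - φ r) + φ r := by ring
    have e : smul t w - t • w = smul (t - φ r) w - (t - φ r) • w := by
      rw [ht, hadds _ _ _ hw, add_smul, hcompat r _ hw, algebraMap_smul]
      abel
    rw [e]
    exact key _ hr _ hw
  -- Step 3: W ≤ nS • W, hence W = ⊥ by Nakayama
  have hle : W ≤ nS • W := by
    rw [hW, Submodule.span_le]
    rintro x ⟨t, w, hw, rfl⟩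
    exact key2 t w hw
  have hfg : W.FG := by
    have : IsNoetherian S N := inferInstance
    exact (isNoetherian_def.mp this) W
  have hjac : nS ≤ Ideal.jacobson ⊥ := by
    rw [IsLocalRing.jacobson_eq_maximalIdeal ⊥ bot_ne_top]
  have hbot : W = ⊥ :=
    Submodule.eq_bot_of_le_smul_of_le_jacobson_bot nS W hfg hle hjac
  intro s v hv
  have : smul s v - s • v ∈ W := Submodule.subset_span ⟨s, v, hv, rfl⟩
  rw [hbot, Submodule.mem_bot, sub_eq_zero] at this
  exact this
end

section
/- Let φ: R → S be a local homomorphism of Noetherian local rings satisfying condition (†), and let M be an R-submodule of a finitely generated S-module N. Then the set V(M) = {x ∈ N : Sx ⊆ M} is the unique largest R-submodule of M admitting a compatible S-module structure; moreover every R-submodule of M admitting a compatible S-module structure is an S-submodule of N contained in M. -/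
open IsLocalRing

theorem smul_eq_smul_aux
    (R S : Type*) [CommRing R] [CommRing S]
    [IsNoetherianRing S] [IsLocalRing R] [IsLocalRing S]
    [Algebra R S]
    (h1 : (maximalIdeal R).map (algebraMap R S) = maximalIdeal S)
    (h2 : ∀ s : S, ∃ r : R, s - algebraMap R S r ∈ maximalIdeal S)
    (N : Type*) [AddCommGroup N] [Module S N] [Module R N] [IsScalarTower R S N]
    [Module.Finite S N]
    (V : Submodule R N)
    (smul : S → N → N)
    (hmem : ∀ s, ∀ v ∈ V, smul s v ∈ V)
    (hmul : ∀ s t, ∀ v ∈ V, smul (s * t) v = smul s (smul t v))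
    (haddS : ∀ s t, ∀ v ∈ V, smul (s + t) v = smul s v + smul t v)
    (halg : ∀ r : R, ∀ v ∈ V, smul (algebraMap R S r) v = r • v) :
    ∀ s : S, ∀ v ∈ V, smul s v = s • v := by
  classical
  set D : Submodule R N :=
    Submodule.span R {d | ∃ s, ∃ v ∈ V, d = smul s v - s • v} with hD
  -- the defect map, additive in the scalar
  have hgen : ∀ s : S, ∀ v ∈ V, smul s v - s • v ∈ D := fun s v hv =>
    Submodule.subset_span ⟨s, v, hv, rfl⟩
  have step1 : ∀ n ∈ (maximalIdeal R).map (algebraMap R S), ∀ v ∈ V,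
      smul n v - n • v ∈ (maximalIdeal R) • D := by
    intro n hn v hv
    let g : S →+ N := AddMonoidHom.mk' (fun s => smul s v - s • v) (by
      intro a b
      simp only [haddS a b v hv, add_smul]
      abel)
    have hgs : ∀ s, g s = smul s v - s • v := fun s => rfl
    rw [Ideal.map, Ideal.span, Submodule.mem_span_set] at hn
    obtain ⟨c, hsupp, hsum⟩ := hn
    have : smul n v - n • v = g n := rfl
    rw [this, ← hsum, Finsupp.sum, map_sum]
    refine Submodule.sum_mem _ ?_
    intro x hx
    obtain ⟨r, hr, hrx⟩ := hsupp hx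
    have hx' : c x • x = algebraMap R S r * c x := by
      rw [← hrx, smul_eq_mul, mul_comm]
    rw [hx', hgs]
    have h3 : smul (algebraMap R S r * c x) v = r • smul (c x) v := by
      rw [hmul _ _ v hv, halg r _ (hmem _ v hv)]
    have h4 : (algebraMap R S r * c x) • v = r • (c x • v) := by
      rw [mul_smul, algebraMap_smul]
    rw [h3, h4, ← smul_sub]
    exact Submodule.smul_mem_smul hr (hgen _ v hv)
  have step2 : D ≤ (maximalIdeal R) • D := by
    rw [hD, Submodule.span_le]
    rintro d ⟨s, v, hv, rfl⟩
    obtain ⟨r, hr⟩ := h2 s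
    rw [← h1] at hr
    have hsplit : smul s v - s • v =
        (smul (algebraMap R S r) v - (algebraMap R S r) • v)
          + (smul (s - algebraMap R S r) v - (s - algebraMap R S r) • v) := by
      have := haddS (algebraMap R S r) (s - algebraMap R S r) v hv
      rw [add_sub_cancel] at this
      rw [this, sub_smul]
      abel
    rw [hsplit, halg r v hv, algebraMap_smul, sub_self, zero_add]
    exact step1 _ hr v hv
  set D' : Submodule S N := Submodule.span S
      {d | ∃ s, ∃ v ∈ V, d = smul s v - s • v} with hD'
  have hDD' : ∀ x ∈ D, x ∈ D' := by
    have h6 : D ≤ D'.restrictScalars R := by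
      rw [hD]
      exact Submodule.span_le.2 fun y hy => Submodule.subset_span hy
    exact fun x hx => h6 hx
  have step3 : D' ≤ (maximalIdeal S) • D' := by
    rw [hD', Submodule.span_le]
    intro d hd
    have hdD : d ∈ D := Submodule.subset_span hd
    have hdmD : d ∈ (maximalIdeal R) • D := step2 hdD
    refine Submodule.smul_induction_on hdmD ?_ ?_
    · intro r hr x hx
      have h5 : r • x = (algebraMap R S r) • x := (algebraMap_smul S r x).symm
      rw [h5]
      refine Submodule.smul_mem_smul ?_ (hDD' x hx)
      rw [← h1]
      exact Ideal.mem_map_of_mem _ hr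
    · intro x y hx hy
      exact Submodule.add_mem _ hx hy
  have hfg : D'.FG := IsNoetherian.noetherian D'
  have hjac : (maximalIdeal S) ≤ Ideal.jacobson ⊥ := by
    rw [IsLocalRing.jacobson_eq_maximalIdeal (⊥ : Ideal S) bot_ne_top]
  have hbot : D' = ⊥ :=
    Submodule.eq_bot_of_le_smul_of_le_jacobson_bot (maximalIdeal S) D' hfg step3 hjac
  intro s v hv
  have : smul s v - s • v ∈ D' := Submodule.subset_span ⟨s, v, hv, rfl⟩
  rw [hbot, Submodule.mem_bot] at this
  exact sub_eq_zero.mp this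


/-- An R-submodule `V` of an S-module `N` "has a compatible S-module structure" if
there is an S-scalar multiplication on `V` (given by a function `smul : S → N → N`
preserving `V`) satisfying the module axioms and compatible with the R-action. -/
def HasCompatibleSMulOn (R S N : Type*) [CommRing R] [CommRing S] [Algebra R S]
    [AddCommGroup N] [Module S N] [Module R N] [IsScalarTower R S N]
    (V : Submodule R N) : Prop :=
  ∃ smul : S → N → N,
    (∀ s, ∀ v ∈ V, smul s v ∈ V) ∧
    (∀ v ∈ V, smul 1 v = v) ∧
    (∀ s t, ∀ v ∈ V, smul (s * t) v = smul s (smul t v)) ∧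
    (∀ s, ∀ v ∈ V, ∀ w ∈ V, smul s (v + w) = smul s v + smul s w) ∧
    (∀ s t, ∀ v ∈ V, smul (s + t) v = smul s v + smul t v) ∧
    (∀ v ∈ V, smul 0 v = 0) ∧
    (∀ s, smul s 0 = 0) ∧
    (∀ r : R, ∀ v ∈ V, smul (algebraMap R S r) v = r • v)

theorem stmt_4 (R S : Type*) [CommRing R] [CommRing S]
    [IsNoetherianRing R] [IsNoetherianRing S] [IsLocalRing R] [IsLocalRing S]
    [Algebra R S] [IsLocalHom (algebraMap R S)]
    (h1 : (IsLocalRing.maximalIdeal R).map (algebraMap R S) = IsLocalRing.maximalIdeal S)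
    (h2 : ∀ s : S, ∃ r : R, s - algebraMap R S r ∈ IsLocalRing.maximalIdeal S)
    (N : Type*) [AddCommGroup N] [Module S N] [Module R N] [IsScalarTower R S N]
    [Module.Finite S N]
    (M : Submodule R N)
    (W : Set N) (hW : W = {x : N | ∀ s : S, s • x ∈ M}) :
    -- W is an R-submodule of M admitting a compatible S-module structure:
    (∃ VW : Submodule R N, (VW : Set N) = W ∧ VW ≤ M ∧ HasCompatibleSMulOn R S N VW) ∧
    -- W is S-stable:
    (∀ s : S, ∀ x ∈ W, s • x ∈ W) ∧
    -- every R-submodule of M with a compatible S-module structure is an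
    -- S-submodule of N contained in M, and is contained in W:
    (∀ V : Submodule R N, V ≤ M → HasCompatibleSMulOn R S N V →
      (∀ s : S, ∀ v ∈ V, s • v ∈ V) ∧ (V : Set N) ⊆ W) := by
  classical
  subst hW
  have hstab : ∀ s : S, ∀ x ∈ {x : N | ∀ s : S, s • x ∈ M}, s • x ∈ {x : N | ∀ s : S, s • x ∈ M} := by
    intro s x hx t
    rw [smul_smul]
    exact hx (t * s)
  let VW : Submodule R N :=
    { carrier := {x : N | ∀ s : S, s • x ∈ M}
      zero_mem' := fun s => by rw [smul_zero]; exact M.zero_mem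
      add_mem' := fun {a b} ha hb s => by
        rw [smul_add]; exact M.add_mem (ha s) (hb s)
      smul_mem' := fun r x hx s => by
        have : s • r • x = r • (s • x) := by
          rw [← algebraMap_smul S r x, smul_smul, mul_comm, ← smul_smul,
            algebraMap_smul]
        rw [this]
        exact M.smul_mem r (hx s) }
  have hVWle : VW ≤ M := fun x hx => by simpa using hx 1
  refine ⟨⟨VW, rfl, hVWle, ?_⟩, hstab, ?_⟩
  · refine ⟨fun s x => s • x, ?_, ?_, ?_, ?_, ?_, ?_, ?_, ?_⟩
    · intro s v hv t; rw [smul_smul]; exact hv (t * s)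
    · intro v _; exact one_smul S v
    · intro s t v _; exact mul_smul s t v
    · intro s v _ w _; exact smul_add s v w
    · intro s t v _; exact add_smul s t v
    · intro v _; exact zero_smul S v
    · intro s; exact smul_zero s
    · intro r v _; exact algebraMap_smul S r v
  · rintro V hVM ⟨smul, hmem, hone, hmul, hdist, haddS, hzero, hzero', halg⟩
    have key : ∀ s : S, ∀ v ∈ V, smul s v = s • v :=
      smul_eq_smul_aux R S h1 h2 N V smul hmem hmul haddS halg
    constructor
    · intro s v hv
      rw [← key s v hv]
      exact hmem s v hv
    · intro v hv s
      have := hmem s v hv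
      rw [key s v hv] at this
      exact hVM this
end

section
/- Let φ: R → S be a local homomorphism of Noetherian local rings satisfying condition (†), let L be any S-module, and let M be an R-submodule of a finitely generated S-module with V(M) its largest S-submodule. Then the natural injection Hom_R(L, V(M)) → Hom_R(L, M) is an isomorphism. -/
theorem stmt_5 (R S : Type*) [CommRing R] [CommRing S]
    [IsNoetherianRing R] [IsNoetherianRing S] [IsLocalRing R] [IsLocalRing S]
    [Algebra R S] [IsLocalHom (algebraMap R S)]
    (h1 : (IsLocalRing.maximalIdeal R).map (algebraMap R S) = IsLocalRing.maximalIdeal S)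
    (h2 : ∀ s : S, ∃ r : R, s - algebraMap R S r ∈ IsLocalRing.maximalIdeal S)
    (L : Type*) [AddCommGroup L] [Module S L] [Module R L] [IsScalarTower R S L]
    (N : Type*) [AddCommGroup N] [Module S N] [Module R N] [IsScalarTower R S N]
    [Module.Finite S N]
    (M : Submodule R N)
    (VM : Submodule R N) (hVM : ∀ x : N, x ∈ VM ↔ ∀ s : S, s • x ∈ M)
    (hle : VM ≤ M) :
    Function.Bijective
      (fun f : L →ₗ[R] VM => (Submodule.inclusion hle).comp f : (L →ₗ[R] VM) → (L →ₗ[R] M)) := by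
  constructor
  · intro f g hfg
    ext z
    have h := LinearMap.congr_fun hfg z
    rw [LinearMap.comp_apply, LinearMap.comp_apply, Subtype.ext_iff,
      Submodule.coe_inclusion, Submodule.coe_inclusion] at h
    exact h
  · intro F
    -- key claim: for any x, F commutes with the S-action at x
    have key : ∀ x : L, ∀ s : S, s • ((F x : N)) = (F (s • x) : N) := by
      intro x
      set m := IsLocalRing.maximalIdeal R with hm
      set n := IsLocalRing.maximalIdeal S with hn
      -- the defect map
      let D : S →ₗ[R] N :=
        { toFun := fun s => s • (F x : N) - (F (s • x) : N)
          map_add' := by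
            intro a b
            show (a + b) • (F x : N) - (F ((a + b) • x) : N) = _
            rw [add_smul, add_smul, F.map_add]
            push_cast
            abel
          map_smul' := by
            intro r a
            show (r • a) • (F x : N) - (F ((r • a) • x) : N) =
              r • (a • (F x : N) - (F (a • x) : N))
            rw [smul_assoc, smul_assoc, F.map_smul, smul_sub, Submodule.coe_smul] }
      have hD0 : ∀ r : R, D (algebraMap R S r) = 0 := by
        intro r
        show (algebraMap R S r) • (F x : N) - (F ((algebraMap R S r) • x) : N) = 0
        rw [algebraMap_smul, algebraMap_smul, F.map_smul, Submodule.coe_smul, sub_self]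
      -- the S-span of the range of D
      set W : Submodule S N := Submodule.span S (Set.range D) with hW
      have hWn : W ≤ n • W := by
        rw [hW, Submodule.span_le]
        rintro _ ⟨s, rfl⟩
        obtain ⟨r, hr⟩ := h2 s
        have hDs : D s = D (s - algebraMap R S r) := by
          rw [map_sub, hD0, sub_zero]
        rw [hDs]
        -- s - φ r ∈ m • ⊤ as R-submodule of S
        have hmem : s - algebraMap R S r ∈ m • (⊤ : Submodule R S) := by
          rw [Ideal.smul_top_eq_map]
          exact (Submodule.restrictScalars_mem R _ _).mpr (h1 ▸ hr)
        -- its image under D lies in m • (range D over R)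
        have himg : D (s - algebraMap R S r) ∈ m • LinearMap.range D := by
          have := Submodule.mem_map_of_mem (f := D) hmem
          rw [Submodule.map_smul'', Submodule.map_top] at this
          exact this
        -- and m • (range D over R) ⊆ n • W
        refine Submodule.smul_induction_on himg ?_ ?_
        · intro a ha z hz
          have haS : algebraMap R S a ∈ n := by
            rw [← h1]; exact Ideal.mem_map_of_mem _ ha
          have hzW : z ∈ W := by
            rw [hW]
            obtain ⟨u, rfl⟩ := hz
            exact Submodule.subset_span ⟨u, rfl⟩
          have : a • z = (algebraMap R S a) • z := (algebraMap_smul S a z).symm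
          rw [this]
          exact Submodule.smul_mem_smul haS hzW
        · intro y1 y2 hy1 hy2
          exact Submodule.add_mem _ hy1 hy2
      -- Nakayama: W = ⊥
      have hWfg : W.FG := IsNoetherian.noetherian W
      have hjac : n ≤ Ideal.jacobson (⊥ : Ideal S) := by
        rw [IsLocalRing.jacobson_eq_maximalIdeal (⊥ : Ideal S) bot_ne_top]
      have hWbot : W = ⊥ := Submodule.eq_bot_of_le_smul_of_le_jacobson_bot n W hWfg hWn hjac
      intro s
      have hDs : D s ∈ W := Submodule.subset_span ⟨s, rfl⟩
      rw [hWbot, Submodule.mem_bot] at hDs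
      have : s • (F x : N) - (F (s • x) : N) = 0 := hDs
      exact sub_eq_zero.mp this
    -- image of F lies in VM
    have hmemVM : ∀ x : L, (F x : N) ∈ VM := by
      intro x
      rw [hVM]
      intro s
      rw [key x s]
      exact (F (s • x)).2
    refine ⟨{ toFun := fun x => ⟨(F x : N), hmemVM x⟩
              map_add' := by intro a b; ext; simp
              map_smul' := by intro r a; ext; simp }, ?_⟩
    ext z
    rfl
end

section
/- Let φ: R → S be a local homomorphism of Noetherian local rings satisfying condition (†), and let M be an R-submodule of a finitely generated S-module N with V(M) = {x ∈ N : Sx ⊆ M}. Then the image of the evaluation map ε: Hom_R(S,M) → M, ψ ↦ ψ(1), is exactly V(M), and ε induces an isomorphism Hom_R(S,M) ≅ V(M). In particular, if M is finitely generated over R, then Hom_R(S,M) is finitely generated over R. -/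
theorem stmt_6 (R S : Type*) [CommRing R] [CommRing S]
    [IsNoetherianRing R] [IsNoetherianRing S] [IsLocalRing R] [IsLocalRing S]
    [Algebra R S] [IsLocalHom (algebraMap R S)]
    (h1 : (IsLocalRing.maximalIdeal R).map (algebraMap R S) = IsLocalRing.maximalIdeal S)
    (h2 : ∀ s : S, ∃ r : R, s - algebraMap R S r ∈ IsLocalRing.maximalIdeal S)
    (N : Type*) [AddCommGroup N] [Module S N] [Module R N] [IsScalarTower R S N]
    [Module.Finite S N]
    (M : Submodule R N)
    (VM : Submodule R N) (hVM : ∀ x : N, x ∈ VM ↔ ∀ s : S, s • x ∈ M) :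
    -- the image of the evaluation map ψ ↦ ψ(1) is exactly V(M)
    (Set.range (fun ψ : S →ₗ[R] M => ((ψ 1 : M) : N)) = (VM : Set N)) ∧
    -- the evaluation map is injective, hence induces an isomorphism Hom_R(S,M) ≅ V(M)
    Function.Injective (fun ψ : S →ₗ[R] M => ((ψ 1 : M) : N)) ∧
    -- if M is finitely generated over R then so is Hom_R(S,M)
    (Module.Finite R M → Module.Finite R (S →ₗ[R] M)) := by
  classical
  -- Key claim: any R-linear ψ : S → M satisfies ψ s = s • ψ 1 in N.
  have key : ∀ (ψ : S →ₗ[R] M) (s : S), ((ψ s : M) : N) = s • ((ψ 1 : M) : N) := by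
    intro ψ
    set x : N := ((ψ 1 : M) : N) with hx
    set d : S → N := fun s => ((ψ s : M) : N) - s • x with hd
    -- d is additive
    have dadd : ∀ a b : S, d (a + b) = d a + d b := by
      intro a b; simp only [hd, map_add, Submodule.coe_add, add_smul]; abel
    have dzero : d 0 = 0 := by simp [hd]
    -- d vanishes on the image of R
    have dalg : ∀ r : R, d (algebraMap R S r) = 0 := by
      intro r
      have h1' : algebraMap R S r = r • (1 : S) := by
        rw [Algebra.smul_def, mul_one]
      have h2' : (algebraMap R S r) • x = r • x := algebraMap_smul S r x
      simp only [hd, h1', map_smul, Submodule.coe_smul]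
      rw [← h1', h2', sub_self]
    -- interaction with multiplication by elements of m
    have dmul : ∀ (r : R) (a : S), r ∈ IsLocalRing.maximalIdeal R →
        d (a * algebraMap R S r) = algebraMap R S r • d a := by
      intro r a _
      have ha : a * algebraMap R S r = r • a := by
        rw [Algebra.smul_def, mul_comm]
      have hsm : (a * algebraMap R S r) • x = r • (a • x) := by
        rw [ha, smul_assoc]
      simp only [hd, ha, map_smul, Submodule.coe_smul, hsm, smul_sub, algebraMap_smul, smul_assoc]
    -- the S-span of the range of d
    set D : Submodule S N := Submodule.span S (Set.range d) with hD
    have hDfg : D.FG := IsNoetherian.noetherian D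
    -- every value of d lies in n • D
    have hle : ∀ s : S, d s ∈ (IsLocalRing.maximalIdeal S) • D := by
      intro s
      obtain ⟨r, hr⟩ := h2 s
      have heq : d s = d (s - algebraMap R S r) := by
        have : s = (s - algebraMap R S r) + algebraMap R S r := by ring
        rw [this, dadd, dalg, add_zero]
        congr 1; ring
      rw [heq]
      -- s - algebraMap r ∈ n = m S = span of image
      have hmem : s - algebraMap R S r ∈
          Ideal.span ((algebraMap R S) '' (IsLocalRing.maximalIdeal R)) := by
        rw [← Ideal.map]; rw [h1]; exact hr
      -- induction over the span, with the property ∀ a, d (a * t) ∈ n • D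
      have main : ∀ t, t ∈ Ideal.span ((algebraMap R S) '' (IsLocalRing.maximalIdeal R)) →
          ∀ a : S, d (a * t) ∈ (IsLocalRing.maximalIdeal S) • D := by
        intro t ht
        refine Submodule.span_induction (p := fun t _ =>
          ∀ a : S, d (a * t) ∈ (IsLocalRing.maximalIdeal S) • D) ?_ ?_ ?_ ?_ ht
        · rintro _ ⟨r, hrm, rfl⟩ a
          rw [dmul r a hrm]
          refine Submodule.smul_mem_smul ?_ ?_
          · rw [← h1]; exact Ideal.mem_map_of_mem _ hrm
          · exact Submodule.subset_span ⟨a, rfl⟩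
        · intro a; rw [mul_zero, dzero]; exact Submodule.zero_mem _
        · intro u v _ _ hu hv a
          rw [mul_add, dadd]; exact Submodule.add_mem _ (hu a) (hv a)
        · intro c u _ hu a
          have : a * (c • u) = (a * c) * u := by
            rw [smul_eq_mul]; ring
          rw [this]; exact hu (a * c)
      have := main _ hmem 1
      rwa [one_mul] at this
    have hDle : D ≤ (IsLocalRing.maximalIdeal S) • D := by
      rw [hD]
      refine Submodule.span_le.mpr ?_
      rintro _ ⟨s, rfl⟩
      exact hle s
    have hjac : (IsLocalRing.maximalIdeal S) ≤ Ideal.jacobson ⊥ := by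
      rw [IsLocalRing.jacobson_eq_maximalIdeal ⊥ bot_ne_top]
    have hDbot : D = ⊥ :=
      Submodule.eq_bot_of_le_smul_of_le_jacobson_bot _ D hDfg hDle hjac
    intro s
    have : d s ∈ D := Submodule.subset_span ⟨s, rfl⟩
    rw [hDbot, Submodule.mem_bot] at this
    have := sub_eq_zero.mp (by simpa [hd] using this)
    exact this
  -- the three statements
  have hrange : Set.range (fun ψ : S →ₗ[R] M => ((ψ 1 : M) : N)) = (VM : Set N) := by
    ext y
    constructor
    · rintro ⟨ψ, rfl⟩
      rw [SetLike.mem_coe, hVM]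
      intro s
      rw [← key ψ s]
      exact (ψ s).2
    · intro hy
      rw [SetLike.mem_coe, hVM] at hy
      refine ⟨{ toFun := fun s => ⟨s • y, hy s⟩, map_add' := ?_, map_smul' := ?_ }, ?_⟩
      · intro a b; ext; simp [add_smul]
      · intro r a; ext; simp [smul_assoc]
      · simp
  have hinj : Function.Injective (fun ψ : S →ₗ[R] M => ((ψ 1 : M) : N)) := by
    intro ψ ψ' h
    ext s
    have h' : ((ψ 1 : M) : N) = ((ψ' 1 : M) : N) := h
    have : ((ψ s : M) : N) = ((ψ' s : M) : N) := by
      rw [key ψ s, key ψ' s, h']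
    exact_mod_cast this
  refine ⟨hrange, hinj, ?_⟩
  intro hM
  -- the evaluation map as a linear map into N
  set ε : (S →ₗ[R] M) →ₗ[R] N :=
    { toFun := fun ψ => ((ψ 1 : M) : N)
      map_add' := fun ψ ψ' => rfl
      map_smul' := fun r ψ => rfl } with hε
  have hεinj : Function.Injective ε := hinj
  have hεrange : LinearMap.range ε = VM := by
    ext y
    rw [LinearMap.mem_range, ← SetLike.mem_coe, ← hrange]
    exact Iff.rfl
  -- VM is finitely generated since VM ≤ M and M is Noetherian
  have hVMle : VM ≤ M := by
    intro y hy
    rw [hVM] at hy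
    simpa using hy 1
  have hMnoeth : IsNoetherian R M := isNoetherian_of_isNoetherianRing_of_finite R M
  have hfg : VM.FG := by
    have h' : (VM.comap M.subtype).FG := IsNoetherian.noetherian _
    have : Submodule.map M.subtype (VM.comap M.subtype) = VM := by
      rw [Submodule.map_comap_subtype, inf_eq_right.mpr hVMle]
    rw [← this]
    exact Submodule.FG.map _ h'
  have hVMfin : Module.Finite R VM := Module.Finite.iff_fg.mpr hfg
  have e : (S →ₗ[R] M) ≃ₗ[R] VM :=
    (LinearEquiv.ofInjective ε hεinj).trans (LinearEquiv.ofEq _ _ hεrange)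
  exact Module.Finite.equiv e.symm
end

section
/- Let φ: R → S be a local homomorphism of Noetherian local rings satisfying condition (†), and let M be a finitely generated R-module. The following are equivalent: (1) M admits an S-module structure compatible with its R-module structure via φ; (2) the natural map ι: M → S ⊗_R M, x ↦ 1⊗x, is bijective; (3) the evaluation map ε: Hom_R(S,M) → M, ψ ↦ ψ(1), is bijective. -/
/-- An R-module `M` "has an S-module structure compatible with its R-module
structure" if there is an S-scalar multiplication on `M` satisfying the module
axioms and with `r • x = φ(r) ∘ x` for all `r : R`, `x : M`. -/
def HasCompatibleSModule (R S M : Type*) [CommRing R] [CommRing S] [Algebra R S]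
    [AddCommGroup M] [Module R M] : Prop :=
  ∃ smul : S → M → M,
    (∀ x, smul 1 x = x) ∧
    (∀ s t x, smul (s * t) x = smul s (smul t x)) ∧
    (∀ s x y, smul s (x + y) = smul s x + smul s y) ∧
    (∀ s t x, smul (s + t) x = smul s x + smul t x) ∧
    (∀ r : R, ∀ x, smul (algebraMap R S r) x = r • x)

open IsLocalRing TensorProduct

universe u v

/-- Krull intersection theorem, universe-polymorphic version. -/
lemma krull_inter {R : Type u} {M : Type v} [CommRing R] [IsNoetherianRing R] [IsLocalRing R]
    [AddCommGroup M] [Module R M] [Module.Finite R M] (x : M)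
    (hx : ∀ k : ℕ, x ∈ (maximalIdeal R ^ k • ⊤ : Submodule R M)) : x = 0 := by
  let R' : Type max u v := ULift.{v} R
  let M' : Type max u v := ULift.{u} M
  let e : R' ≃+* R := ULift.ringEquiv
  haveI : IsNoetherianRing R' := isNoetherianRing_of_ringEquiv R e.symm
  haveI : IsLocalRing R' := e.symm.isLocalRing
  haveI : Module.Finite R M' := Module.Finite.equiv (ULift.moduleEquiv (R := R) (M := M)).symm
  haveI : Module.Finite R' M' := by
    obtain ⟨s, hs⟩ := Module.Finite.fg_top (R := R) (M := M')
    refine ⟨⟨s, eq_top_iff.mpr fun y _ => ?_⟩⟩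
    have hy : y ∈ Submodule.span R (s : Set M') := by rw [hs]; trivial
    refine Submodule.span_induction (fun z hz => Submodule.subset_span hz)
      (Submodule.zero_mem _) (fun a b _ _ ha hb => Submodule.add_mem _ ha hb) ?_ hy
    intro r z _ hz
    have : r • z = (ULift.up r : R') • z := rfl
    rw [this]
    exact Submodule.smul_mem _ _ hz
  have hmap : ∀ a ∈ maximalIdeal R, (ULift.up a : R') ∈ maximalIdeal R' := by
    intro a ha
    rw [mem_maximalIdeal] at ha ⊢
    intro hu
    exact ha (hu.map e)
  have hmem : ∀ k : ℕ, (ULift.up x : M') ∈ (maximalIdeal R' ^ k • ⊤ : Submodule R' M') := by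
    intro k
    have hpow : ∀ a ∈ maximalIdeal R ^ k, (ULift.up a : R') ∈ maximalIdeal R' ^ k := by
      intro a ha
      have h2 : e.symm a ∈ Ideal.map (e.symm : R →+* R') (maximalIdeal R ^ k) :=
        Ideal.mem_map_of_mem _ ha
      rw [Ideal.map_pow] at h2
      refine Ideal.pow_right_mono ?_ k h2
      rw [Ideal.map_le_iff_le_comap]
      intro b hb
      exact hmap b hb
    refine Submodule.smul_induction_on (hx k) ?_ ?_
    · intro r hr n _
      have : (ULift.up (r • n) : M') = (ULift.up r : R') • (ULift.up n : M') := rfl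
      rw [this]
      exact Submodule.smul_mem_smul (hpow r hr) trivial
    · intro a b ha hb
      have : (ULift.up (a + b) : M') = ULift.up a + ULift.up b := rfl
      rw [this]
      exact Submodule.add_mem _ ha hb
  have hbot := Ideal.iInf_pow_smul_eq_bot_of_isLocalRing (R := R') (M := M')
    (I := maximalIdeal R') ((maximalIdeal.isMaximal R').ne_top)
  have : (ULift.up x : M') ∈ (⨅ k : ℕ, maximalIdeal R' ^ k • ⊤ : Submodule R' M') :=
    Submodule.mem_iInf _ |>.mpr hmem
  rw [hbot] at this
  simpa using congrArg ULift.down (by simpa using this : (ULift.up x : M') = 0)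

/-- An R-linear map S → M vanishing on the image of R vanishes, under (†). -/
lemma aux_vanish {R S M : Type*} [CommRing R] [CommRing S]
    [IsNoetherianRing R] [IsLocalRing R] [IsLocalRing S] [Algebra R S]
    (h1 : (maximalIdeal R).map (algebraMap R S) = maximalIdeal S)
    (h2 : ∀ s : S, ∃ r : R, s - algebraMap R S r ∈ maximalIdeal S)
    [AddCommGroup M] [Module R M] [Module.Finite R M]
    (δ : S →ₗ[R] M) (hδ : ∀ r : R, δ (algebraMap R S r) = 0) : δ = 0 := by
  have key : ∀ (k : ℕ) (s : S), δ s ∈ (maximalIdeal R ^ k • ⊤ : Submodule R M) := by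
    intro k
    induction k with
    | zero => intro s; simp
    | succ k ih =>
      have main : ∀ t ∈ (maximalIdeal R).map (algebraMap R S),
          ∀ u : S, δ (u * t) ∈ (maximalIdeal R ^ (k + 1) • ⊤ : Submodule R M) := by
        intro t ht
        rw [Ideal.map] at ht
        refine Submodule.span_induction ?_ ?_ ?_ ?_ ht
        · rintro _ ⟨a, ha, rfl⟩ u
          have h3 : δ (u * algebraMap R S a) = a • δ u := by
            rw [mul_comm, ← Algebra.smul_def, map_smul]
          rw [h3, pow_succ', mul_smul]
          exact Submodule.smul_mem_smul ha (ih u)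
        · intro u; simp
        · intro x y hx hy px py u
          rw [mul_add, map_add]; exact add_mem (px u) (py u)
        · intro s x hx px u
          rw [smul_eq_mul, ← mul_assoc]; exact px (u * s)
      intro s
      obtain ⟨r, hr⟩ := h2 s
      have h4 : δ s = δ (1 * (s - algebraMap R S r)) := by
        rw [one_mul, map_sub, hδ, sub_zero]
      rw [h4]
      exact main _ (h1 ▸ hr) 1
  ext s
  simpa using krull_inter (δ s) (fun k => key k s)

/-- The evaluation-at-one map is always injective under (†). -/
lemma eps_inj {R S M : Type*} [CommRing R] [CommRing S]
    [IsNoetherianRing R] [IsLocalRing R] [IsLocalRing S] [Algebra R S]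
    (h1 : (maximalIdeal R).map (algebraMap R S) = maximalIdeal S)
    (h2 : ∀ s : S, ∃ r : R, s - algebraMap R S r ∈ maximalIdeal S)
    [AddCommGroup M] [Module R M] [Module.Finite R M] :
    Function.Injective (fun ψ : S →ₗ[R] M => ψ 1) := by
  intro ψ ψ' h
  simp only at h
  have hδ : ∀ r : R, (ψ - ψ') (algebraMap R S r) = 0 := by
    intro r
    have e1 : (algebraMap R S r) = r • (1 : S) := by rw [Algebra.smul_def, mul_one]
    rw [e1, map_smul]
    simp only [LinearMap.sub_apply, h, sub_self, smul_zero]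
  exact sub_eq_zero.mp (aux_vanish h1 h2 (ψ - ψ') hδ)

/-- (1) → (2): if M has a compatible S-module structure then ι is bijective. -/
lemma one_to_two {R S M : Type*} [CommRing R] [CommRing S]
    [IsNoetherianRing S] [IsLocalRing S] [Algebra R S] [IsLocalRing R]
    (h1 : (maximalIdeal R).map (algebraMap R S) = maximalIdeal S)
    (h2 : ∀ s : S, ∃ r : R, s - algebraMap R S r ∈ maximalIdeal S)
    [AddCommGroup M] [Module R M] [Module.Finite R M]
    (hM : HasCompatibleSModule R S M) :
    Function.Bijective (fun x : M => (1 : S) ⊗ₜ[R] x) := by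
  obtain ⟨sm, hone, hmul, hsadd, hadds, hcomp⟩ := hM
  letI : SMul S M := ⟨sm⟩
  letI : Module S M := Module.ofMinimalAxioms hsadd hadds hmul hone
  haveI : IsScalarTower R S M := ⟨fun r s x => by
    show sm (r • s) x = r • sm s x
    rw [Algebra.smul_def, hmul, hcomp]⟩
  let ν : S ⊗[R] M →ₗ[S] M := (LinearMap.id : M →ₗ[R] M).liftBaseChange S
  have hν : ∀ (s : S) (x : M), ν (s ⊗ₜ[R] x) = s • x := fun s x => by
    simp [ν]
  have hνι : ∀ x : M, ν ((1 : S) ⊗ₜ[R] x) = x := fun x => by rw [hν, one_smul]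
  set K := LinearMap.ker ν with hK
  have step1 : ∀ z : S ⊗[R] M, ∃ x : M,
      z - (1 : S) ⊗ₜ[R] x ∈ ((maximalIdeal S) • ⊤ : Submodule S (S ⊗[R] M)) := by
    intro z
    induction z with
    | zero => exact ⟨0, by simp⟩
    | tmul s x =>
      obtain ⟨r, hr⟩ := h2 s
      refine ⟨r • x, ?_⟩
      have e1 : (1 : S) ⊗ₜ[R] (r • x) = (algebraMap R S r) ⊗ₜ[R] x := by
        rw [tmul_smul, smul_tmul', Algebra.smul_def, mul_one]
      have e2 : s ⊗ₜ[R] x - (algebraMap R S r) ⊗ₜ[R] x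
          = (s - algebraMap R S r) • ((1 : S) ⊗ₜ[R] x) := by
        rw [smul_tmul', smul_eq_mul, mul_one, sub_tmul]
      rw [e1, e2]
      exact Submodule.smul_mem_smul hr trivial
    | add z w hz hw =>
      obtain ⟨x, hx⟩ := hz
      obtain ⟨y, hy⟩ := hw
      refine ⟨x + y, ?_⟩
      have e3 : z + w - (1 : S) ⊗ₜ[R] (x + y)
          = (z - (1 : S) ⊗ₜ[R] x) + (w - (1 : S) ⊗ₜ[R] y) := by
        rw [tmul_add]; abel
      rw [e3]
      exact Submodule.add_mem _ hx hy
  have step2 : ∀ a ∈ maximalIdeal S, ∀ z : S ⊗[R] M,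
      a • z - (1 : S) ⊗ₜ[R] (ν (a • z)) ∈ ((maximalIdeal S) • K : Submodule S (S ⊗[R] M)) := by
    intro a ha
    rw [← h1, Ideal.map] at ha
    refine Submodule.span_induction ?_ ?_ ?_ ?_ ha
    · rintro _ ⟨c, hc, rfl⟩ z
      have hc' : algebraMap R S c ∈ maximalIdeal S := h1 ▸ Ideal.mem_map_of_mem _ hc
      have e1 : ν ((algebraMap R S c) • z) = algebraMap R S c • ν z := map_smul ν _ z
      have e2 : (1 : S) ⊗ₜ[R] ((algebraMap R S c) • ν z)
          = (algebraMap R S c) • ((1 : S) ⊗ₜ[R] (ν z)) := by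
        rw [algebraMap_smul, algebraMap_smul, tmul_smul]
      have e3 : (algebraMap R S c) • z - (1 : S) ⊗ₜ[R] (ν ((algebraMap R S c) • z))
          = (algebraMap R S c) • (z - (1 : S) ⊗ₜ[R] (ν z)) := by
        rw [e1, e2, smul_sub]
      rw [e3]
      refine Submodule.smul_mem_smul hc' ?_
      rw [hK, LinearMap.mem_ker, map_sub, hνι, sub_self]
    · intro z; simp
    · intro a b _ _ pa pb z
      have e4 : (a + b) • z - (1 : S) ⊗ₜ[R] (ν ((a + b) • z))
          = (a • z - (1 : S) ⊗ₜ[R] (ν (a • z))) + (b • z - (1 : S) ⊗ₜ[R] (ν (b • z))) := by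
        rw [add_smul, map_add, tmul_add]; abel
      rw [e4]
      exact Submodule.add_mem _ (pa z) (pb z)
    · intro s a _ pa z
      have e5 : (s • a) • z = a • (s • z) := by
        rw [smul_eq_mul, mul_comm, mul_smul]
      rw [e5]
      exact pa (s • z)
  have step3 : ∀ u ∈ ((maximalIdeal S) • ⊤ : Submodule S (S ⊗[R] M)),
      u - (1 : S) ⊗ₜ[R] (ν u) ∈ ((maximalIdeal S) • K : Submodule S (S ⊗[R] M)) := by
    intro u hu
    refine Submodule.smul_induction_on hu ?_ ?_
    · intro a ha z _
      exact step2 a ha z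
    · intro a b pa pb
      have e6 : a + b - (1 : S) ⊗ₜ[R] (ν (a + b))
          = (a - (1 : S) ⊗ₜ[R] (ν a)) + (b - (1 : S) ⊗ₜ[R] (ν b)) := by
        rw [map_add, tmul_add]; abel
      rw [e6]
      exact Submodule.add_mem _ pa pb
  have step4 : K ≤ ((maximalIdeal S) • K : Submodule S (S ⊗[R] M)) := by
    intro k hk
    obtain ⟨x, hx⟩ := step1 k
    have hνu : ν (k - (1 : S) ⊗ₜ[R] x) = -x := by
      rw [map_sub, hνι, (LinearMap.mem_ker).mp hk, zero_sub]
    have h5 := step3 _ hx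
    rw [hνu] at h5
    have e7 : k - (1 : S) ⊗ₜ[R] x - (1 : S) ⊗ₜ[R] (-x) = k := by
      rw [tmul_neg]; abel
    rw [e7] at h5
    exact h5
  have hKfg : K.FG := IsNoetherian.noetherian K
  have hjac : maximalIdeal S ≤ (⊥ : Ideal S).jacobson := by
    rw [jacobson_eq_maximalIdeal (⊥ : Ideal S) bot_ne_top]
  have hKbot : K = ⊥ :=
    Submodule.eq_bot_of_le_smul_of_le_jacobson_bot (maximalIdeal S) K hKfg step4 hjac
  have hinj : Function.Injective ν := by
    rw [← LinearMap.ker_eq_bot]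
    exact hKbot
  constructor
  · intro x y hxy
    have := congrArg ν hxy
    rwa [hνι, hνι] at this
  · intro z
    exact ⟨ν z, hinj (by rw [hνι])⟩

/-- (2) → (1). -/
lemma two_to_one {R S M : Type*} [CommRing R] [CommRing S] [Algebra R S]
    [AddCommGroup M] [Module R M]
    (h : Function.Bijective (fun x : M => (1 : S) ⊗ₜ[R] x)) :
    HasCompatibleSModule R S M := by
  let e := Equiv.ofBijective _ h
  have hsymm : ∀ z : S ⊗[R] M, (1 : S) ⊗ₜ[R] (e.symm z) = z := fun z => e.apply_symm_apply z
  have hback : ∀ x : M, e.symm ((1 : S) ⊗ₜ[R] x) = x := fun x => e.symm_apply_apply x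
  have gadd : ∀ a b : S ⊗[R] M, e.symm (a + b) = e.symm a + e.symm b := by
    intro a b
    apply e.injective
    rw [e.apply_symm_apply]
    show a + b = (1 : S) ⊗ₜ[R] (e.symm a + e.symm b)
    rw [tmul_add, hsymm, hsymm]
  refine ⟨fun s x => e.symm (s • ((1 : S) ⊗ₜ[R] x)), ?_, ?_, ?_, ?_, ?_⟩
  · intro x
    show e.symm ((1 : S) • ((1 : S) ⊗ₜ[R] x)) = x
    rw [one_smul]; exact hback x
  · intro s t x
    show e.symm ((s * t) • ((1 : S) ⊗ₜ[R] x))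
        = e.symm (s • ((1 : S) ⊗ₜ[R] (e.symm (t • ((1 : S) ⊗ₜ[R] x)))))
    rw [hsymm, mul_smul]
  · intro s x y
    show e.symm (s • ((1 : S) ⊗ₜ[R] (x + y))) = _
    rw [tmul_add, smul_add, gadd]
  · intro s t x
    show e.symm ((s + t) • ((1 : S) ⊗ₜ[R] x)) = _
    rw [add_smul, gadd]
  · intro r x
    show e.symm ((algebraMap R S r) • ((1 : S) ⊗ₜ[R] x)) = r • x
    rw [algebraMap_smul, ← tmul_smul, hback]

/-- (1) → surjectivity of evaluation. -/
lemma one_to_three_surj {R S M : Type*} [CommRing R] [CommRing S] [Algebra R S]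
    [AddCommGroup M] [Module R M] (hM : HasCompatibleSModule R S M) :
    Function.Surjective (fun ψ : S →ₗ[R] M => ψ 1) := by
  obtain ⟨sm, hone, hmul, hsadd, hadds, hcomp⟩ := hM
  intro x
  refine ⟨{ toFun := fun s => sm s x, map_add' := fun s t => hadds s t x,
            map_smul' := ?_ }, hone x⟩
  intro r s
  show sm (r • s) x = r • sm s x
  rw [Algebra.smul_def, hmul, hcomp]

/-- (3) → (1). -/
lemma three_to_one {R S M : Type*} [CommRing R] [CommRing S] [Algebra R S]
    [AddCommGroup M] [Module R M]
    (h : Function.Bijective (fun ψ : S →ₗ[R] M => ψ 1)) :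
    HasCompatibleSModule R S M := by
  let e := Equiv.ofBijective _ h
  have happ : ∀ x : M, (e.symm x) 1 = x := fun x => e.apply_symm_apply x
  refine ⟨fun s x => (e.symm x) s, ?_, ?_, ?_, ?_, ?_⟩
  · exact happ
  · intro s t x
    have key : e.symm ((e.symm x) t) = (e.symm x).comp (LinearMap.mulLeft R t) := by
      apply e.injective
      rw [e.apply_symm_apply]
      show (e.symm x) t = ((e.symm x).comp (LinearMap.mulLeft R t)) 1
      simp
    show (e.symm x) (s * t) = (e.symm ((e.symm x) t)) s
    rw [key]
    show (e.symm x) (s * t) = (e.symm x) (t * s)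
    rw [mul_comm]
  · intro s x y
    have key : e.symm (x + y) = e.symm x + e.symm y := by
      apply e.injective
      rw [e.apply_symm_apply]
      show x + y = (e.symm x + e.symm y) 1
      rw [LinearMap.add_apply, happ, happ]
    show (e.symm (x + y)) s = _
    rw [key, LinearMap.add_apply]
  · intro s t x
    show (e.symm x) (s + t) = _
    rw [map_add]
  · intro r x
    show (e.symm x) (algebraMap R S r) = r • x
    rw [Algebra.algebraMap_eq_smul_one, map_smul, happ]

theorem stmt_7 (R S : Type*) [CommRing R] [CommRing S]
    [IsNoetherianRing R] [IsNoetherianRing S] [IsLocalRing R] [IsLocalRing S]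
    [Algebra R S] [IsLocalHom (algebraMap R S)]
    (h1 : (IsLocalRing.maximalIdeal R).map (algebraMap R S) = IsLocalRing.maximalIdeal S)
    (h2 : ∀ s : S, ∃ r : R, s - algebraMap R S r ∈ IsLocalRing.maximalIdeal S)
    (M : Type*) [AddCommGroup M] [Module R M] [Module.Finite R M] :
    (HasCompatibleSModule R S M ↔
      Function.Bijective (fun x : M => (1 : S) ⊗ₜ[R] x)) ∧
    (Function.Bijective (fun x : M => (1 : S) ⊗ₜ[R] x) ↔
      Function.Bijective (fun ψ : S →ₗ[R] M => ψ 1)) := by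
  constructor
  · exact ⟨one_to_two h1 h2, two_to_one⟩
  · constructor
    · intro hι
      exact ⟨eps_inj h1 h2, one_to_three_surj (two_to_one hι)⟩
    · intro hε
      exact one_to_two h1 h2 (three_to_one hε)
end

section
/- Let φ: R → S be a flat local homomorphism of Noetherian local rings satisfying condition (†), and let M be a finitely generated R-module. Then M admits a compatible S-module structure if and only if S ⊗_R M is finitely generated as an R-module. -/
open TensorProduct IsLocalRing

section Aux

variable {R S : Type*} [CommRing R] [CommRing S] [Algebra R S]
variable {M : Type*} [AddCommGroup M] [Module R M]

/-- If `t` lies in the extension of `I` to `S`, then `t ⊗ m ∈ I • ⊤` in `S ⊗[R] M`. -/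
lemma aux_tmul_mem_smul_top {I : Ideal R} {t : S} (ht : t ∈ I.map (algebraMap R S)) (x : M) :
    t ⊗ₜ[R] x ∈ I • (⊤ : Submodule R (S ⊗[R] M)) := by
  have h : t ∈ I • (⊤ : Submodule R S) := by
    rw [Ideal.smul_top_eq_map]; exact ht
  have h2 := Submodule.mem_map_of_mem (f := ((TensorProduct.mk R S M).flip x)) h
  rw [Submodule.map_smul''] at h2
  exact Submodule.smul_mono le_rfl le_top h2

/-- Key lemma: under (†), every element of `S ⊗[R] M` lies in `(1 ⊗ M) + m (S ⊗ M)`. -/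
lemma aux_keyA [IsLocalRing R] [IsLocalRing S]
    (h1 : (maximalIdeal R).map (algebraMap R S) = maximalIdeal S)
    (h2 : ∀ s : S, ∃ r : R, s - algebraMap R S r ∈ maximalIdeal S)
    (x : S ⊗[R] M) :
    x ∈ LinearMap.range (TensorProduct.mk R S M 1) ⊔
      (maximalIdeal R) • (⊤ : Submodule R (S ⊗[R] M)) := by
  induction x using TensorProduct.induction_on with
  | zero => exact zero_mem _
  | tmul s m =>
      obtain ⟨r, hr⟩ := h2 s
      have e1 : (1 : S) ⊗ₜ[R] (r • m) = (algebraMap R S r) ⊗ₜ[R] m := by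
        rw [tmul_smul, smul_tmul', Algebra.algebraMap_eq_smul_one]
      have e2 : s ⊗ₜ[R] m = (1 : S) ⊗ₜ[R] (r • m) + (s - algebraMap R S r) ⊗ₜ[R] m := by
        rw [e1, ← add_tmul, add_sub_cancel]
      rw [e2]
      refine add_mem (Submodule.mem_sup_left ⟨r • m, rfl⟩) (Submodule.mem_sup_right ?_)
      rw [← h1] at hr
      exact aux_tmul_mem_smul_top hr m
  | add x y hx hy => exact add_mem hx hy

/-- Under (†) and flatness, the map `m ↦ 1 ⊗ m` is injective. -/
lemma aux_mk_one_injective [IsLocalRing R] [IsLocalRing S] [Module.Flat R S]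
    (h1 : (maximalIdeal R).map (algebraMap R S) = maximalIdeal S) :
    Function.Injective (TensorProduct.mk R S M 1) := by
  rw [injective_iff_map_eq_zero]
  intro m hm
  by_contra hm0
  -- let `I` be the annihilator of `m`
  set f : R →ₗ[R] M := LinearMap.toSpanSingleton R M m with hf
  set I : Ideal R := LinearMap.ker f with hI
  have hItop : I ≠ ⊤ := by
    intro h
    have h1m : (1 : R) ∈ I := h ▸ Submodule.mem_top
    simp only [hI, LinearMap.mem_ker, hf, LinearMap.toSpanSingleton_apply, one_smul] at h1m
    exact hm0 h1m
  -- the induced injective map `R ⧸ I → M`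
  set g : (R ⧸ I) →ₗ[R] M := I.liftQ f le_rfl with hg
  have hginj : Function.Injective g :=
    LinearMap.ker_eq_bot.mp (Submodule.ker_liftQ_eq_bot I f le_rfl le_rfl)
  have hg1 : g (Ideal.Quotient.mk I 1) = m := by
    show f 1 = m
    simp [hf]
  -- tensoring with `S` stays injective
  have hinj := Module.Flat.lTensor_preserves_injective_linearMap (M := S) g hginj
  have hz : (LinearMap.lTensor S g) ((1 : S) ⊗ₜ[R] (Ideal.Quotient.mk I 1)) = 0 := by
    rw [LinearMap.lTensor_tmul, hg1]
    exact hm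
  have hz2 : (1 : S) ⊗ₜ[R] (Ideal.Quotient.mk I 1) = (0 : S ⊗[R] (R ⧸ I)) := by
    apply hinj
    rw [hz, map_zero]
  -- transport to `S ⧸ I • ⊤`
  have hz3 : (Ideal.Quotient.mk I 1) ⊗ₜ[R] (1 : S) = (0 : (R ⧸ I) ⊗[R] S) := by
    rw [show (Ideal.Quotient.mk I 1) ⊗ₜ[R] (1 : S) =
        (TensorProduct.comm R S (R ⧸ I)) ((1 : S) ⊗ₜ[R] (Ideal.Quotient.mk I 1)) from rfl,
      hz2, LinearEquiv.map_zero]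
  have hz4 : (Submodule.Quotient.mk (1 : S) : S ⧸ (I • (⊤ : Submodule R S))) = 0 := by
    have h4 := congrArg (TensorProduct.quotTensorEquivQuotSMul S I) hz3
    rw [TensorProduct.quotTensorEquivQuotSMul_mk_tmul, LinearEquiv.map_zero, one_smul] at h4
    exact h4
  have hone : (1 : S) ∈ I • (⊤ : Submodule R S) :=
    (Submodule.Quotient.mk_eq_zero _).mp hz4
  rw [Ideal.smul_top_eq_map] at hone
  have hle : I.map (algebraMap R S) ≤ maximalIdeal S := by
    rw [← h1]
    exact Ideal.map_mono (le_maximalIdeal hItop)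
  exact (maximalIdeal.isMaximal S).ne_top (Ideal.eq_top_iff_one _ |>.mpr (hle hone))

end Aux

theorem stmt_8 (R S : Type*) [CommRing R] [CommRing S]
    [IsNoetherianRing R] [IsNoetherianRing S] [IsLocalRing R] [IsLocalRing S]
    [Algebra R S] [Module.Flat R S] [IsLocalHom (algebraMap R S)]
    (h1 : (IsLocalRing.maximalIdeal R).map (algebraMap R S) = IsLocalRing.maximalIdeal S)
    (h2 : ∀ s : S, ∃ r : R, s - algebraMap R S r ∈ IsLocalRing.maximalIdeal S)
    (M : Type*) [AddCommGroup M] [Module R M] [Module.Finite R M] :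
    HasCompatibleSModule R S M ↔ Module.Finite R (TensorProduct R S M) := by
  constructor
  · -- Forward: compatible S-structure ⇒ S ⊗ M is R-finite
    rintro ⟨sm, hone, hmul, hsadd, haddl, hcomp⟩
    letI : Module S M :=
      { smul := sm
        one_smul := hone
        mul_smul := hmul
        smul_add := hsadd
        add_smul := haddl
        smul_zero := fun s => by
          have h := hsadd s 0 0
          rw [add_zero] at h
          exact add_eq_right.mp h.symm
        zero_smul := fun x => by
          have h := hcomp 0 x
          rwa [map_zero, zero_smul] at h }
    haveI : IsScalarTower R S M := ⟨fun r s x => by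
      show sm (r • s) x = r • sm s x
      rw [Algebra.smul_def, hmul, hcomp]⟩
    set μ : S ⊗[R] M →ₗ[S] M := (LinearMap.id : M →ₗ[R] M).liftBaseChange S with hμdef
    have hμ : ∀ (s : S) (x : M), μ (s ⊗ₜ[R] x) = sm s x := fun s x => rfl
    have hμ1 : ∀ x : M, μ ((1 : S) ⊗ₜ[R] x) = x := fun x => by rw [hμ, hone]
    have hsurj : Function.Surjective μ := fun x => ⟨(1 : S) ⊗ₜ[R] x, hμ1 x⟩
    set K : Submodule S (S ⊗[R] M) := LinearMap.ker μ with hKdef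
    haveI : Module.Finite S (S ⊗[R] M) := Module.Finite.base_change R S M
    have hKfg : K.FG := IsNoetherian.noetherian K
    -- the projection onto the kernel
    set π : S ⊗[R] M →ₗ[R] S ⊗[R] M :=
      LinearMap.id - (TensorProduct.mk R S M 1) ∘ₗ (μ.restrictScalars R) with hπdef
    have hπK : ∀ z, π z ∈ K := by
      intro z
      show μ (π z) = 0
      rw [hπdef]
      simp only [LinearMap.sub_apply, LinearMap.id_apply, LinearMap.comp_apply,
        LinearMap.restrictScalars_apply, map_sub]
      rw [show μ ((TensorProduct.mk R S M 1) (μ z)) = μ z from hμ1 (μ z), sub_self]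
    have hKle1 : (K.restrictScalars R) ≤ (maximalIdeal R) • (K.restrictScalars R) := by
      intro x hx
      have hxK : μ x = 0 := hx
      obtain ⟨a, ha, y, hy, hxay⟩ :=
        Submodule.mem_sup.mp (aux_keyA h1 h2 x)
      obtain ⟨m₀, rfl⟩ := ha
      have hπx : π x = x := by
        rw [hπdef]
        simp only [LinearMap.sub_apply, LinearMap.id_apply, LinearMap.comp_apply,
          LinearMap.restrictScalars_apply, hxK, map_zero, sub_zero]
      have hπa : π ((TensorProduct.mk R S M 1) m₀) = 0 := by
        rw [hπdef]
        simp only [LinearMap.sub_apply, LinearMap.id_apply, LinearMap.comp_apply,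
          LinearMap.restrictScalars_apply]
        rw [show μ ((TensorProduct.mk R S M 1) m₀) = m₀ from hμ1 m₀, sub_self]
      have hxy : x = π y := by
        rw [← hπx, ← hxay, map_add, hπa, zero_add]
      have hmem : π y ∈ (maximalIdeal R) • Submodule.map π ⊤ := by
        rw [← Submodule.map_smul'']
        exact ⟨y, hy, rfl⟩
      rw [hxy]
      refine Submodule.smul_mono le_rfl ?_ hmem
      rintro z ⟨w, -, rfl⟩
      exact hπK w
    have hKle : K ≤ (maximalIdeal S) • K := by
      intro x hx
      have hx' := hKle1 hx
      refine Submodule.smul_induction_on hx' ?_ ?_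
      · intro r hr k hk
        rw [← algebraMap_smul S r k]
        exact Submodule.smul_mem_smul (h1 ▸ Ideal.mem_map_of_mem _ hr) hk
      · intro a b ha hb
        exact add_mem ha hb
    have hKbot : K = ⊥ :=
      Submodule.eq_bot_of_le_smul_of_le_jacobson_bot (maximalIdeal S) K hKfg hKle
        (maximalIdeal_le_jacobson ⊥)
    have hinj : Function.Injective μ := LinearMap.ker_eq_bot.mp hKbot
    exact Module.Finite.equiv
      (LinearEquiv.ofBijective (μ.restrictScalars R) ⟨hinj, hsurj⟩).symm
  · -- Converse: S ⊗ M is R-finite ⇒ compatible S-structure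
    intro hfin
    have fgtop : (⊤ : Submodule R (S ⊗[R] M)).FG := Module.finite_def.mp hfin
    have hNN : (⊤ : Submodule R (S ⊗[R] M)) ≤
        LinearMap.range (TensorProduct.mk R S M 1) ⊔
          (maximalIdeal R) • (⊤ : Submodule R (S ⊗[R] M)) :=
      fun x _ => aux_keyA h1 h2 x
    have hsup := Submodule.sup_eq_sup_smul_of_le_smul_of_le_jacobson (J := ⊥) fgtop
      (maximalIdeal_le_jacobson ⊥) hNN
    rw [sup_top_eq, Submodule.bot_smul, sup_bot_eq] at hsup
    have hsurj : Function.Surjective (TensorProduct.mk R S M 1) :=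
      LinearMap.range_eq_top.mp hsup.symm
    have hinj := aux_mk_one_injective (M := M) h1
    set e : M ≃ₗ[R] S ⊗[R] M :=
      LinearEquiv.ofBijective (TensorProduct.mk R S M 1) ⟨hinj, hsurj⟩ with he
    refine ⟨fun s x => e.symm (s • e x), ?_, ?_, ?_, ?_, ?_⟩
    · intro x
      show e.symm ((1 : S) • e x) = x
      rw [one_smul, e.symm_apply_apply]
    · intro s t x
      show e.symm ((s * t) • e x) = e.symm (s • e (e.symm (t • e x)))
      rw [e.apply_symm_apply, mul_smul]
    · intro s x y
      show e.symm (s • e (x + y)) = e.symm (s • e x) + e.symm (s • e y)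
      rw [map_add, smul_add, map_add]
    · intro s t x
      show e.symm ((s + t) • e x) = e.symm (s • e x) + e.symm (t • e x)
      rw [add_smul, map_add]
    · intro r x
      show e.symm ((algebraMap R S r) • e x) = r • x
      rw [algebraMap_smul, ← LinearEquiv.map_smul, e.symm_apply_apply]
end

section
/- Let φ: R → S be a flat local homomorphism of Noetherian local rings satisfying condition (†), and let M be a finitely generated S-module. The following are equivalent: (1) M is finitely generated as an R-module; (2) the natural map M → S ⊗_R M, x ↦ 1⊗x, is bijective; (3) S ⊗_R M is finitely generated as an R-module. -/
open TensorProduct IsLocalRing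

section Aux

variable {R S : Type*} [CommRing R] [CommRing S]
    [IsNoetherianRing R] [IsNoetherianRing S] [IsLocalRing R] [IsLocalRing S]
    [Algebra R S] [Module.Flat R S] [IsLocalHom (algebraMap R S)]
    {M : Type*} [AddCommGroup M] [Module S M] [Module R M] [IsScalarTower R S M]
    [Module.Finite S M]

/-- The multiplication map `S ⊗[R] M →ₗ[S] M`. -/
noncomputable def muMap (R S M : Type*) [CommRing R] [CommRing S] [Algebra R S]
    [AddCommGroup M] [Module S M] [Module R M] [IsScalarTower R S M] :
    S ⊗[R] M →ₗ[S] M :=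
  (LinearMap.id : M →ₗ[R] M).liftBaseChange S

lemma muMap_tmul (s : S) (x : M) : muMap R S M (s ⊗ₜ[R] x) = s • x := rfl

lemma muMap_one_tmul (x : M) : muMap R S M ((1 : S) ⊗ₜ[R] x) = x := by
  simp [muMap_tmul]

lemma muMap_surjective : Function.Surjective (muMap R S M) :=
  fun x => ⟨(1 : S) ⊗ₜ[R] x, muMap_one_tmul x⟩

lemma mem_maximalIdeal_map (a : R) (ha : a ∈ maximalIdeal R) :
    algebraMap R S a ∈ maximalIdeal S := by
  intro hu
  exact ha (IsLocalHom.map_nonunit a hu)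

lemma tmul_mem_smul_top
    (h1 : (IsLocalRing.maximalIdeal R).map (algebraMap R S) = IsLocalRing.maximalIdeal S)
    (t : S) (ht : t ∈ maximalIdeal S) (x : M) :
    t ⊗ₜ[R] x ∈ (maximalIdeal R • (⊤ : Submodule R (S ⊗[R] M))) := by
  rw [← h1] at ht
  rw [Ideal.map] at ht
  induction ht using Submodule.span_induction with
  | mem s hs =>
      obtain ⟨a, ha, rfl⟩ := hs
      have : (algebraMap R S a) ⊗ₜ[R] x = a • ((1 : S) ⊗ₜ[R] x) := by
        rw [TensorProduct.smul_tmul', Algebra.smul_def, mul_one]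
      rw [this]
      exact Submodule.smul_mem_smul ha Submodule.mem_top
  | zero => rw [TensorProduct.zero_tmul]; exact Submodule.zero_mem _
  | add s t _ _ hs ht =>
      rw [TensorProduct.add_tmul]; exact Submodule.add_mem _ hs ht
  | smul s t _ hs =>
      have h : (s • t) ⊗ₜ[R] x = s • (t ⊗ₜ[R] x) := by
        rw [TensorProduct.smul_tmul']
      rw [h]
      refine Submodule.smul_induction_on hs ?_ ?_
      · intro a ha u _
        rw [smul_comm]
        exact Submodule.smul_mem_smul ha Submodule.mem_top
      · intro u v hu hv
        rw [smul_add]; exact Submodule.add_mem _ hu hv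

lemma mem_range_sup_smul_top
    (h1 : (IsLocalRing.maximalIdeal R).map (algebraMap R S) = IsLocalRing.maximalIdeal S)
    (h2 : ∀ s : S, ∃ r : R, s - algebraMap R S r ∈ IsLocalRing.maximalIdeal S)
    (t : S ⊗[R] M) :
    t ∈ (LinearMap.range ((TensorProduct.mk R S M) 1) ⊔
      (maximalIdeal R • (⊤ : Submodule R (S ⊗[R] M)))) := by
  induction t with
  | zero => exact Submodule.zero_mem _
  | tmul s x =>
      obtain ⟨r, hr⟩ := h2 s
      have key : s ⊗ₜ[R] x = (1 : S) ⊗ₜ[R] (r • x) + (s - algebraMap R S r) ⊗ₜ[R] x := by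
        rw [TensorProduct.tmul_smul, TensorProduct.smul_tmul', Algebra.smul_def, mul_one,
          TensorProduct.sub_tmul]
        abel
      rw [key]
      exact Submodule.add_mem _
        (Submodule.mem_sup_left ⟨r • x, rfl⟩)
        (Submodule.mem_sup_right (tmul_mem_smul_top h1 _ hr x))
  | add u v hu hv => exact Submodule.add_mem _ hu hv

/-- (1) ⇒ (2) : if `M` is finite over `R`, the natural map is bijective. -/
lemma bijective_of_finite
    (h1 : (IsLocalRing.maximalIdeal R).map (algebraMap R S) = IsLocalRing.maximalIdeal S)
    (h2 : ∀ s : S, ∃ r : R, s - algebraMap R S r ∈ IsLocalRing.maximalIdeal S)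
    [Module.Finite R M] :
    Function.Bijective (fun x : M => (1 : S) ⊗ₜ[R] x) := by
  set μ : S ⊗[R] M →ₗ[S] M := muMap R S M with hμ
  -- the projection onto the kernel
  set π : S ⊗[R] M →ₗ[R] S ⊗[R] M :=
    LinearMap.id - (TensorProduct.mk R S M 1).comp (μ.restrictScalars R) with hπ
  have hπ_apply : ∀ t, π t = t - (1 : S) ⊗ₜ[R] (μ t) := fun t => rfl
  have hπ_ker : ∀ t, π t ∈ LinearMap.ker μ := by
    intro t
    simp only [LinearMap.mem_ker, hπ_apply, map_sub, hμ, muMap_one_tmul, sub_self]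
  have hK : LinearMap.ker μ ≤ (maximalIdeal S) • LinearMap.ker μ := by
    intro y hy
    have hy' := mem_range_sup_smul_top h1 h2 (M := M) y
    obtain ⟨u, hu, z, hz, huz⟩ := Submodule.mem_sup.mp hy'
    obtain ⟨x, rfl⟩ := hu
    have hπy : π y = y := by
      rw [hπ_apply, LinearMap.mem_ker.mp hy, TensorProduct.tmul_zero, sub_zero]
    have hπx : π ((TensorProduct.mk R S M 1) x) = 0 := by
      rw [hπ_apply]
      simp [hμ, muMap_one_tmul]
    have : y = π z := by
      rw [← hπy, ← huz, map_add, hπx, zero_add]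
    rw [this]
    clear hπy huz hy this
    refine Submodule.smul_induction_on hz ?_ ?_
    · intro a ha u _
      rw [map_smul, ← algebraMap_smul S a (π u)]
      exact Submodule.smul_mem_smul (mem_maximalIdeal_map a ha) (hπ_ker u)
    · intro u v hu hv
      rw [map_add]; exact Submodule.add_mem _ hu hv
  have hfin : Module.Finite S (S ⊗[R] M) := inferInstance
  have hker_bot : LinearMap.ker μ = ⊥ :=
    Submodule.eq_bot_of_le_smul_of_le_jacobson_bot (maximalIdeal S) _
      (IsNoetherian.noetherian _) hK
      (by rw [jacobson_eq_maximalIdeal (⊥ : Ideal S) bot_ne_top])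
  constructor
  · intro x y hxy
    have : μ ((1 : S) ⊗ₜ[R] x) = μ ((1 : S) ⊗ₜ[R] y) := by
      simpa using congrArg μ hxy
    simpa [hμ, muMap_one_tmul] using this
  · intro t
    refine ⟨μ t, ?_⟩
    have : t - (1 : S) ⊗ₜ[R] (μ t) ∈ LinearMap.ker μ := hπ_ker t
    rw [hker_bot, Submodule.mem_bot, sub_eq_zero] at this
    exact this.symm

/-- Faithful flatness from the local hom hypotheses. -/
lemma faithfullyFlat_of_h1
    (h1 : (IsLocalRing.maximalIdeal R).map (algebraMap R S) = IsLocalRing.maximalIdeal S) :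
    Module.FaithfullyFlat R S := by
  refine ⟨fun I hI hItop => ?_⟩
  rw [IsLocalRing.eq_maximalIdeal hI, Ideal.smul_top_eq_map, h1] at hItop
  have h1top : (1 : S) ∈ Submodule.restrictScalars R (maximalIdeal S) := by
    rw [hItop]; trivial
  exact (IsLocalRing.maximalIdeal.isMaximal S).ne_top ((Ideal.eq_top_iff_one _).mpr h1top)

/-- (2) ⇒ (1) : if the natural map is bijective, `M` is finite over `R`. -/
lemma finite_of_bijective
    (h1 : (IsLocalRing.maximalIdeal R).map (algebraMap R S) = IsLocalRing.maximalIdeal S)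
    (hb : Function.Bijective (fun x : M => (1 : S) ⊗ₜ[R] x)) :
    Module.Finite R M := by
  have hff : Module.FaithfullyFlat R S := faithfullyFlat_of_h1 h1
  set μ : S ⊗[R] M →ₗ[S] M := muMap R S M with hμ
  have hμ_bij : Function.Bijective μ := by
    constructor
    · intro a b hab
      obtain ⟨x, rfl⟩ := hb.2 a
      obtain ⟨y, rfl⟩ := hb.2 b
      simp only [hμ, muMap_one_tmul] at hab
      rw [hab]
    · exact muMap_surjective
  obtain ⟨ss, hss⟩ := Module.Finite.fg_top (R := S) (M := M)
  set N : Submodule R M := Submodule.span R (↑ss : Set M) with hN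
  -- base change of inclusion
  set f1 : S ⊗[R] N →ₗ[S] S ⊗[R] M := LinearMap.baseChange S N.subtype with hf1
  have hg : Function.Surjective ((N.subtype).liftBaseChange S) := by
    rw [← LinearMap.range_eq_top]
    rw [← top_le_iff, ← hss, Submodule.span_le]
    intro y hy
    have hyN : y ∈ N := Submodule.subset_span hy
    exact ⟨(1 : S) ⊗ₜ[R] (⟨y, hyN⟩ : N), by simp⟩
  have hcomp : ∀ u : S ⊗[R] N, μ (f1 u) = (N.subtype).liftBaseChange S u := by
    intro u
    induction u with
    | zero => simp
    | tmul s n => simp [hμ, hf1, muMap_tmul, LinearMap.liftBaseChange_tmul]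
    | add u v hu hv => simp [map_add, hu, hv]
  have hf1_surj : Function.Surjective f1 := by
    intro t
    obtain ⟨u, hu⟩ := hg (μ t)
    refine ⟨u, hμ_bij.1 ?_⟩
    rw [hcomp u, hu]
  -- quotient
  have hsub : Subsingleton (S ⊗[R] (M ⧸ N)) := by
    have hzero : ∀ w : S ⊗[R] (M ⧸ N), w = 0 := by
      intro w
      have hf2_surj : Function.Surjective (LinearMap.baseChange S N.mkQ) := by
        intro v
        induction v with
        | zero => exact ⟨0, map_zero _⟩
        | tmul s q =>
            obtain ⟨x, rfl⟩ := N.mkQ_surjective q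
            exact ⟨s ⊗ₜ[R] x, rfl⟩
        | add u v hu hv =>
            obtain ⟨a, ha⟩ := hu
            obtain ⟨b, hb'⟩ := hv
            exact ⟨a + b, by rw [map_add, ha, hb']⟩
      obtain ⟨t, rfl⟩ := hf2_surj w
      obtain ⟨u, rfl⟩ := hf1_surj t
      have : ∀ u : S ⊗[R] N, LinearMap.baseChange S N.mkQ (f1 u) = 0 := by
        intro u
        induction u with
        | zero => simp
        | tmul s n =>
            simp only [hf1, LinearMap.baseChange_tmul, Submodule.coe_subtype]
            rw [show N.mkQ (n : M) = 0 from (Submodule.Quotient.mk_eq_zero N).mpr n.2]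
            simp
        | add u v hu hv => rw [map_add, map_add, hu, hv, add_zero]
      exact this u
    exact ⟨fun a b => by rw [hzero a, hzero b]⟩
  have hQ : Subsingleton (M ⧸ N) :=
    Module.FaithfullyFlat.lTensor_reflects_triviality R S (M ⧸ N)
  have hNtop : N = ⊤ := Submodule.Quotient.subsingleton_iff.mp hQ
  exact ⟨⟨ss, by rw [← hN, hNtop]⟩⟩

end Aux

theorem stmt_9 (R S : Type*) [CommRing R] [CommRing S]
    [IsNoetherianRing R] [IsNoetherianRing S] [IsLocalRing R] [IsLocalRing S]
    [Algebra R S] [Module.Flat R S] [IsLocalHom (algebraMap R S)]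
    (h1 : (IsLocalRing.maximalIdeal R).map (algebraMap R S) = IsLocalRing.maximalIdeal S)
    (h2 : ∀ s : S, ∃ r : R, s - algebraMap R S r ∈ IsLocalRing.maximalIdeal S)
    (M : Type*) [AddCommGroup M] [Module S M] [Module R M] [IsScalarTower R S M]
    [Module.Finite S M] :
    (Module.Finite R M ↔ Function.Bijective (fun x : M => (1 : S) ⊗ₜ[R] x)) ∧
    (Function.Bijective (fun x : M => (1 : S) ⊗ₜ[R] x) ↔
      Module.Finite R (TensorProduct R S M)) := by
  constructor
  · exact ⟨fun h => bijective_of_finite h1 h2, fun hb => finite_of_bijective h1 hb⟩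
  · constructor
    · intro hb
      have hM : Module.Finite R M := finite_of_bijective h1 hb
      exact Module.Finite.of_surjective ((TensorProduct.mk R S M) 1) hb.2
    · intro h3
      have hM : Module.Finite R M :=
        Module.Finite.of_surjective ((muMap R S M).restrictScalars R) muMap_surjective
      exact bijective_of_finite h1 h2
end

section
/- Let φ: R → S be a flat local homomorphism of Noetherian local rings satisfying condition (†). If S possesses a faithful S-module that is finitely generated as an R-module, then φ is an isomorphism. -/
theorem stmt_10 (R S : Type*) [CommRing R] [CommRing S]
    [IsNoetherianRing R] [IsNoetherianRing S] [IsLocalRing R] [IsLocalRing S]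
    [Algebra R S] [Module.Flat R S] [IsLocalHom (algebraMap R S)]
    (h1 : (IsLocalRing.maximalIdeal R).map (algebraMap R S) = IsLocalRing.maximalIdeal S)
    (h2 : ∀ s : S, ∃ r : R, s - algebraMap R S r ∈ IsLocalRing.maximalIdeal S)
    (N : Type*) [AddCommGroup N] [Module S N] [Module R N] [IsScalarTower R S N]
    (hfaithful : ∀ s : S, (∀ x : N, s • x = 0) → s = 0)
    (hfin : Module.Finite R N) :
    Function.Bijective (algebraMap R S) := by
  classical
  -- the S-action on N gives an injective R-linear map S → End_R N
  have hcomm : ∀ (s : S) (r : R) (x : N), s • r • x = r • s • x := by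
    intro s r x
    rw [← IsScalarTower.algebraMap_smul S r x, smul_comm, IsScalarTower.algebraMap_smul]
  let f : S →ₗ[R] Module.End R N :=
    { toFun := fun s =>
        { toFun := fun x => s • x
          map_add' := fun x y => smul_add s x y
          map_smul' := fun r x => hcomm s r x }
      map_add' := fun s t => by ext x; simp [add_smul]
      map_smul' := fun r s => by
        ext x
        simp only [LinearMap.coe_mk, AddHom.coe_mk, RingHom.id_apply, LinearMap.smul_apply]
        rw [← IsScalarTower.algebraMap_smul S r s, smul_assoc,
          IsScalarTower.algebraMap_smul] }
  have hfinj : Function.Injective f := by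
    intro s t hst
    refine sub_eq_zero.mp (hfaithful (s - t) fun x => ?_)
    have h := congrArg (fun g => g x) hst
    simp only [LinearMap.coe_mk, AddHom.coe_mk, f] at h
    simp [sub_smul, h]
  -- End_R N is a Noetherian R-module
  obtain ⟨n, g, hg⟩ := Module.Finite.exists_fin (R := R) (M := N)
  let ev : Module.End R N →ₗ[R] (Fin n → N) := LinearMap.pi fun i => LinearMap.applyₗ (g i)
  have hevinj : Function.Injective ev := by
    intro a b hab
    ext x
    have hx : x ∈ Submodule.span R (Set.range g) := hg ▸ Submodule.mem_top
    refine Submodule.span_induction ?_ ?_ ?_ ?_ hx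
    · rintro _ ⟨i, rfl⟩
      exact congrFun hab i
    · simp
    · intro y z _ _ hy hz; simp [map_add, hy, hz]
    · intro r y _ hy; simp [map_smul, hy]
  have hNoe : IsNoetherian R (Module.End R N) :=
    isNoetherian_of_injective ev hevinj
  have hSNoe : IsNoetherian R S := isNoetherian_of_injective f hfinj
  have hSfin : Module.Finite R S := Module.Finite.of_injective f hfinj
  -- surjectivity via Nakayama
  have hjac : IsLocalRing.maximalIdeal R ≤ Ideal.jacobson ⊥ := by
    rw [IsLocalRing.jacobson_eq_maximalIdeal (⊥ : Ideal R) bot_ne_top]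
  have hsub : (⊤ : Submodule R S) ≤
      LinearMap.range (Algebra.linearMap R S) ⊔
        (IsLocalRing.maximalIdeal R) • (⊤ : Submodule R S) := by
    intro s _
    obtain ⟨r, hr⟩ := h2 s
    have : s - algebraMap R S r ∈
        (IsLocalRing.maximalIdeal R) • (⊤ : Submodule R S) := by
      rw [Ideal.smul_top_eq_map, Submodule.restrictScalars_mem, h1]
      exact hr
    have hs : s = algebraMap R S r + (s - algebraMap R S r) := by ring
    rw [hs]
    exact Submodule.add_mem_sup ⟨r, rfl⟩ this
  have hsurj : Function.Surjective (algebraMap R S) := by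
    have := Submodule.le_of_le_smul_of_le_jacobson_bot
      (Module.finite_def.mp hSfin) hjac hsub
    intro s
    obtain ⟨r, hr⟩ := this (Submodule.mem_top : s ∈ ⊤)
    exact ⟨r, hr⟩
  -- S is free over R
  have hfp : Module.FinitePresentation R S := Module.finitePresentation_of_finite R S
  have hfree : Module.Free R S := Module.free_of_flat_of_isLocalRing
  -- injectivity using a basis
  have hinj : Function.Injective (algebraMap R S) := by
    obtain ⟨ι, b⟩ := hfree.exists_basis
    have : Nonempty ι := b.index_nonempty
    obtain ⟨i⟩ := this
    obtain ⟨c, hc⟩ := hsurj (b i)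
    -- b i = c • 1, so (b.repr (b i)) i = c * (b.repr 1) i = 1
    have hci : c * b.repr 1 i = 1 := by
      have : b i = c • (1 : S) := by
        rw [← hc, Algebra.algebraMap_eq_smul_one]
      have h := congrArg (fun x => b.repr x i) this
      simpa [Module.Basis.repr_self] using h.symm
    intro r r' hrr'
    have h0 : (r - r') • (1 : S) = 0 := by
      rw [sub_smul, ← Algebra.algebraMap_eq_smul_one, ← Algebra.algebraMap_eq_smul_one,
        hrr', sub_self]
    have h1' : (r - r') * b.repr 1 i = 0 := by
      have := congrArg (fun x => b.repr x i) h0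
      simpa using this
    have : r - r' = 0 := by
      have := congrArg (fun x => c * x) h1'
      calc r - r' = (r - r') * (c * b.repr 1 i) := by rw [hci, mul_one]
        _ = c * ((r - r') * b.repr 1 i) := by ring
        _ = 0 := by rw [h1', mul_zero]
    exact sub_eq_zero.mp this
  exact ⟨hinj, hsurj⟩
end

section
/- Let φ: R → S be a local homomorphism of Noetherian local rings satisfying condition (†). The following are equivalent: (1) R admits an S-module structure compatible with its R-module structure via φ; (2) φ is an R-split monomorphism; (3) S is a free R-module; (4) φ is bijective. -/
section Aux

variable (R S : Type*) [CommRing R] [CommRing S]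
    [IsNoetherianRing R] [IsNoetherianRing S] [IsLocalRing R] [IsLocalRing S]
    [Algebra R S] [IsLocalHom (algebraMap R S)]

/-- If the algebra map is `R`-split, it is surjective (Krull intersection argument). -/
theorem surj_of_split
    (h1 : (IsLocalRing.maximalIdeal R).map (algebraMap R S) = IsLocalRing.maximalIdeal S)
    (h2 : ∀ s : S, ∃ r : R, s - algebraMap R S r ∈ IsLocalRing.maximalIdeal S)
    (π : S →ₗ[R] R) (hπ : ∀ r : R, π (algebraMap R S r) = r) :
    Function.Surjective (algebraMap R S) := by
  set m := IsLocalRing.maximalIdeal R with hm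
  set n := IsLocalRing.maximalIdeal S with hn
  set C : Submodule R S := LinearMap.ker π with hC
  have hφl : ∀ r : R, Algebra.linearMap R S r = algebraMap R S r := fun r => rfl
  have hrange : m • LinearMap.range (Algebra.linearMap R S) ≤
      LinearMap.range (Algebra.linearMap R S) := by
    refine Submodule.smul_le.2 ?_
    rintro r hr s ⟨a, rfl⟩
    exact ⟨r * a, by simp [Algebra.smul_def, map_mul]⟩
  have hmCC : m • C ≤ C := by
    refine Submodule.smul_le.2 ?_
    intro r hr c hc
    simp only [hC, LinearMap.mem_ker, map_smul] at hc ⊢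
    rw [hc, smul_zero]
  have key : C ≤ m • C := by
    intro c hc
    obtain ⟨r, hr⟩ := h2 c
    have hx : c - algebraMap R S r ∈ m • (⊤ : Submodule R S) := by
      rw [Ideal.smul_top_eq_map, h1]; exact hr
    have htop : (⊤ : Submodule R S) = LinearMap.range (Algebra.linearMap R S) ⊔ C := by
      refine le_antisymm (fun s _ => ?_) le_top
      have hs : s = algebraMap R S (π s) + (s - algebraMap R S (π s)) := by ring
      rw [hs]
      refine Submodule.add_mem_sup ⟨π s, rfl⟩ ?_
      simp [hC, hπ]
    rw [htop, Submodule.smul_sup] at hx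
    obtain ⟨y, hy, z, hz, hyz⟩ := Submodule.mem_sup.1 hx
    obtain ⟨b, hb⟩ := hrange hy
    have hb' : algebraMap R S b = y := hb
    have hc2 : c = algebraMap R S (r + b) + z := by
      rw [map_add, hb', add_assoc, hyz]; ring
    have hz' : π z = 0 := hmCC hz
    have hrb : r + b = 0 := by
      have hc' := hc
      simp only [hC, LinearMap.mem_ker] at hc'
      rw [hc2, map_add, hπ, hz', add_zero] at hc'
      exact hc'
    rw [hc2, hrb, map_zero, zero_add]
    exact hz
  have hpow : ∀ k : ℕ, C ≤ (m ^ k) • (⊤ : Submodule R S) := by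
    intro k
    induction k with
    | zero => rw [pow_zero, Ideal.one_eq_top, Submodule.top_smul]; exact le_top
    | succ k ih =>
      calc C ≤ m • C := key
        _ ≤ m • ((m ^ k) • (⊤ : Submodule R S)) := smul_mono_right m ih
        _ = (m ^ (k+1)) • (⊤ : Submodule R S) := by
            rw [← Submodule.smul_assoc, Ideal.smul_eq_mul, pow_succ, mul_comm]
  have hCbot : C ≤ ⊥ := by
    intro c hc
    have hmem : ∀ k : ℕ, c ∈ n ^ k := by
      intro k
      have hk := hpow k hc
      rw [Ideal.smul_top_eq_map, Ideal.map_pow, h1] at hk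
      exact hk
    have hKrull : (⨅ k : ℕ, n ^ k) = ⊥ :=
      Ideal.iInf_pow_eq_bot_of_isLocalRing n (IsLocalRing.maximalIdeal.isMaximal S).ne_top
    have hcmem : c ∈ (⨅ k : ℕ, n ^ k) := Ideal.mem_iInf.2 hmem
    rwa [hKrull] at hcmem
  intro s
  refine ⟨π s, ?_⟩
  have hsub : s - algebraMap R S (π s) ∈ C := by simp [hC, hπ]
  have hz := hCbot hsub
  rw [Submodule.mem_bot, sub_eq_zero] at hz
  exact hz.symm

/-- If `S` is free over `R`, the algebra map is split. -/
theorem split_of_free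
    (h1 : (IsLocalRing.maximalIdeal R).map (algebraMap R S) = IsLocalRing.maximalIdeal S)
    (hfree : Module.Free R S) :
    ∃ π : S →ₗ[R] R, ∀ r : R, π (algebraMap R S r) = r := by
  set m := IsLocalRing.maximalIdeal R with hm
  obtain ⟨⟨ι, b⟩⟩ := hfree
  have hex : ∃ i : ι, IsUnit (b.repr 1 i) := by
    by_contra h
    push_neg at h
    have hmem : ∀ i, b.repr 1 i ∈ m := fun i => by
      simpa [hm, IsLocalRing.mem_maximalIdeal] using h i
    have hone : (1 : S) ∈ m • (⊤ : Submodule R S) := by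
      have hrepr := b.linearCombination_repr (1 : S)
      rw [← hrepr, Finsupp.linearCombination_apply, Finsupp.sum]
      refine Submodule.sum_mem _ ?_
      intro i _
      exact Submodule.smul_mem_smul (hmem i) trivial
    rw [Ideal.smul_top_eq_map, h1] at hone
    exact (IsLocalRing.maximalIdeal.isMaximal S).ne_top
      ((Ideal.eq_top_iff_one _).2 hone)
  obtain ⟨i, hi⟩ := hex
  obtain ⟨u, hu⟩ := hi
  refine ⟨(↑u⁻¹ : R) • b.coord i, fun r => ?_⟩
  have : algebraMap R S r = r • (1 : S) := by rw [Algebra.smul_def, mul_one]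
  rw [this]
  simp only [LinearMap.smul_apply, map_smul, smul_eq_mul, Module.Basis.coord_apply, ← hu]
  rw [Units.inv_mul, mul_one]

end Aux

theorem stmt_11 (R S : Type*) [CommRing R] [CommRing S]
    [IsNoetherianRing R] [IsNoetherianRing S] [IsLocalRing R] [IsLocalRing S]
    [Algebra R S] [IsLocalHom (algebraMap R S)]
    (h1 : (IsLocalRing.maximalIdeal R).map (algebraMap R S) = IsLocalRing.maximalIdeal S)
    (h2 : ∀ s : S, ∃ r : R, s - algebraMap R S r ∈ IsLocalRing.maximalIdeal S) :
    (HasCompatibleSModule R S R ↔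
      (Function.Injective (algebraMap R S) ∧
        ∃ π : S →ₗ[R] R, ∀ r : R, π (algebraMap R S r) = r)) ∧
    ((Function.Injective (algebraMap R S) ∧
        ∃ π : S →ₗ[R] R, ∀ r : R, π (algebraMap R S r) = r) ↔ Module.Free R S) ∧
    (Module.Free R S ↔ Function.Bijective (algebraMap R S)) := by
  -- injectivity follows from a splitting
  have inj_of_split : (∃ π : S →ₗ[R] R, ∀ r : R, π (algebraMap R S r) = r) →
      Function.Injective (algebraMap R S) := by
    rintro ⟨π, hπ⟩ a b hab
    have := congrArg π hab
    rwa [hπ, hπ] at this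
  have bij_of_split : (∃ π : S →ₗ[R] R, ∀ r : R, π (algebraMap R S r) = r) →
      Function.Bijective (algebraMap R S) := by
    rintro h
    obtain ⟨π, hπ⟩ := h
    exact ⟨inj_of_split ⟨π, hπ⟩, surj_of_split R S h1 h2 π hπ⟩
  have compat_of_bij : Function.Bijective (algebraMap R S) → HasCompatibleSModule R S R := by
    intro hbij
    set e := RingEquiv.ofBijective (algebraMap R S) hbij with he
    refine ⟨fun s x => e.symm s * x, ?_, ?_, ?_, ?_, ?_⟩
    · intro x; simp
    · intro s t x; simp [map_mul, mul_assoc]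
    · intro s x y; simp [mul_add]
    · intro s t x; simp [map_add, add_mul]
    · intro r x
      have hr : e.symm (algebraMap R S r) = r := e.symm_apply_eq.2 rfl
      show e.symm (algebraMap R S r) * x = r • x
      rw [hr, smul_eq_mul]
  have split_of_compat : HasCompatibleSModule R S R →
      ∃ π : S →ₗ[R] R, ∀ r : R, π (algebraMap R S r) = r := by
    rintro ⟨sm, h_one, h_mul, h_add, h_add', h_comp⟩
    refine ⟨{ toFun := fun s => sm s 1,
              map_add' := fun s t => h_add' s t 1,
              map_smul' := fun r s => by
                simp only [RingHom.id_apply, smul_eq_mul]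
                rw [Algebra.smul_def, h_mul, h_comp, smul_eq_mul] }, fun r => ?_⟩
    simp only [LinearMap.coe_mk, AddHom.coe_mk]
    rw [h_comp, smul_eq_mul, mul_one]
  have free_of_bij : Function.Bijective (algebraMap R S) → Module.Free R S := by
    intro hbij
    exact Module.Free.of_equiv (LinearEquiv.ofBijective (Algebra.linearMap R S) hbij)
  refine ⟨⟨fun h => ⟨inj_of_split (split_of_compat h), split_of_compat h⟩,
          fun h => compat_of_bij (bij_of_split h.2)⟩,
         ⟨fun h => free_of_bij (bij_of_split h.2),
          fun h => ⟨inj_of_split (split_of_free R S h1 h), split_of_free R S h1 h⟩⟩,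
         ⟨fun h => bij_of_split (split_of_free R S h1 h),
          fun h => free_of_bij h⟩⟩
end

section
/- Let φ: R → S be a flat local homomorphism of Noetherian local rings satisfying condition (†), and let 0 → M' → M → M'' → 0 be an exact sequence of finitely generated R-modules. Then M has a compatible S-module structure if and only if both M' and M'' have compatible S-module structures. -/
open TensorProduct IsLocalRing LinearMap

section Aux

variable {R S : Type*} [CommRing R] [CommRing S] [Algebra R S]
variable {X : Type*} [AddCommGroup X] [Module R X]

/-- Faithful flatness: the natural map `X → S ⊗ X` is injective. -/
lemma eta_injective [Module.Flat R S] [IsLocalRing R] [IsLocalRing S]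
    [IsLocalHom (algebraMap R S)] :
    Function.Injective (TensorProduct.mk R S X 1) := by
  have key : ∀ z : X, (1:S) ⊗ₜ[R] z = 0 → z = 0 := by
    intro z hz
    by_contra hz0
    set I := (Submodule.span R {z}).annihilator with hIdef
    have hker : LinearMap.ker (LinearMap.toSpanSingleton R X z) = I := by
      ext r
      simp [LinearMap.mem_ker, hIdef, Submodule.mem_annihilator_span_singleton]
    set inc : (R ⧸ I) →ₗ[R] X := Submodule.liftQ I (LinearMap.toSpanSingleton R X z) hker.ge
      with hincdef
    have hinc : Function.Injective inc := by
      rw [← LinearMap.ker_eq_bot]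
      exact Submodule.ker_liftQ_eq_bot I _ _ hker.le
    have h0 : LinearMap.lTensor S inc ((1:S) ⊗ₜ (Ideal.Quotient.mk I 1)) = 0 := by
      rw [LinearMap.lTensor_tmul]
      have : inc (Ideal.Quotient.mk I 1) = z := by
        rw [hincdef, show Ideal.Quotient.mk I (1:R) = Submodule.Quotient.mk 1 from rfl,
          Submodule.liftQ_apply, LinearMap.toSpanSingleton_apply, one_smul]
      rw [this, hz]
    have h1 : (1:S) ⊗ₜ (Ideal.Quotient.mk I (1:R)) = (0 : S ⊗[R] (R ⧸ I)) :=
      Module.Flat.lTensor_preserves_injective_linearMap inc hinc (by simpa using h0)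
    have h2 : (Submodule.Quotient.mk (1:S) : S ⧸ (I • ⊤ : Submodule R S)) = 0 := by
      have h3 := congrArg (TensorProduct.tensorQuotEquivQuotSMul S I) h1
      rw [map_zero, TensorProduct.tensorQuotEquivQuotSMul_tmul_mk, one_smul] at h3
      exact h3
    rw [Submodule.Quotient.mk_eq_zero] at h2
    have hInetop : I ≠ ⊤ := by
      intro htop
      apply hz0
      have h1I : (1:R) ∈ I := htop ▸ Submodule.mem_top
      rw [hIdef, Submodule.mem_annihilator_span_singleton] at h1I
      simpa using h1I
    have hle : (I • ⊤ : Submodule R S) ≤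
        (IsLocalRing.maximalIdeal S).restrictScalars R := by
      refine Submodule.smul_le.2 fun a ha s _ => ?_
      have haR : a ∈ IsLocalRing.maximalIdeal R := IsLocalRing.le_maximalIdeal hInetop ha
      have hφa : algebraMap R S a ∈ IsLocalRing.maximalIdeal S := by
        rw [IsLocalRing.mem_maximalIdeal, mem_nonunits_iff]
        intro hu
        exact mem_nonunits_iff.mp ((IsLocalRing.mem_maximalIdeal a).mp haR)
          (IsLocalHom.map_nonunit a hu)
      have : a • s = algebraMap R S a * s := Algebra.smul_def a s
      rw [Submodule.restrictScalars_mem, this]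
      exact Ideal.mul_mem_right s _ hφa
    have h1mem : (1:S) ∈ IsLocalRing.maximalIdeal S := hle h2
    exact (IsLocalRing.mem_maximalIdeal (1:S)).mp h1mem (isUnit_one)
  intro x y hxy
  have : (1:S) ⊗ₜ[R] (x - y) = 0 := by
    rw [tmul_sub]
    simpa [TensorProduct.mk_apply] using sub_eq_zero_of_eq hxy
  have := key _ this
  exact sub_eq_zero.mp this

variable [IsLocalRing R] [IsLocalRing S] [IsLocalHom (algebraMap R S)]

/-- If `X` has a compatible `S`-module structure, the natural map `X → S ⊗ X`
is surjective. -/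
lemma compatible_implies_surjective [IsNoetherianRing S] [Module.Finite R X]
    (h1 : (IsLocalRing.maximalIdeal R).map (algebraMap R S) = IsLocalRing.maximalIdeal S)
    (h2 : ∀ s : S, ∃ r : R, s - algebraMap R S r ∈ IsLocalRing.maximalIdeal S)
    (hc : HasCompatibleSModule R S X) :
    Function.Surjective (TensorProduct.mk R S X 1) := by
  obtain ⟨σ, hone, hmul, haddx, hadds, hcomp⟩ := hc
  have hσ0 : ∀ s, σ s 0 = 0 := by
    intro s
    have := haddx s 0 0
    rw [add_zero] at this
    exact (left_eq_add.mp this)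
  have hsmulR : ∀ s (r : R) (x : X), σ s (r • x) = r • σ s x := by
    intro s r x
    rw [← hcomp r x, ← hmul, mul_comm, hmul, hcomp]
  let b : S →ₗ[R] X →ₗ[R] X :=
    { toFun := fun s =>
        { toFun := σ s
          map_add' := haddx s
          map_smul' := fun r x => hsmulR s r x }
      map_add' := fun s t => LinearMap.ext fun x => hadds s t x
      map_smul' := fun r s => LinearMap.ext fun x => by
        show σ (r • s) x = r • σ s x
        rw [Algebra.smul_def, hmul, hcomp] }
  set μ : S ⊗[R] X →ₗ[R] X := TensorProduct.lift b with hμdef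
  have hμtmul : ∀ (s : S) (x : X), μ (s ⊗ₜ x) = σ s x := fun s x => rfl
  have hμη : ∀ x : X, μ ((1:S) ⊗ₜ x) = x := fun x => by rw [hμtmul]; exact hone x
  have hμsmul : ∀ (s : S) (u : S ⊗[R] X), μ (s • u) = σ s (μ u) := by
    intro s u
    induction u using TensorProduct.induction_on with
    | zero => rw [smul_zero, map_zero, hσ0]
    | tmul t x => rw [smul_tmul', smul_eq_mul, hμtmul, hμtmul, hmul]
    | add u v hu hv => rw [smul_add, map_add, map_add, hu, hv, haddx]
  let K : Submodule S (S ⊗[R] X) :=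
    { carrier := {u | μ u = 0}
      add_mem' := fun hu hv => by
        simp only [Set.mem_setOf_eq] at *
        rw [map_add, hu, hv, add_zero]
      zero_mem' := by simp only [Set.mem_setOf_eq, map_zero]
      smul_mem' := fun s u hu => by
        simp only [Set.mem_setOf_eq] at *
        rw [hμsmul, hu, hσ0] }
  set mm : Submodule R (S ⊗[R] X) :=
    (IsLocalRing.maximalIdeal R) • (⊤ : Submodule R (S ⊗[R] X)) with hmmdef
  -- every tensor ν ⊗ y with ν in the maximal ideal of S lies in m • ⊤
  have hnu : ∀ ν ∈ IsLocalRing.maximalIdeal S, ∀ y : X, ν ⊗ₜ[R] y ∈ mm := by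
    intro ν hν y
    rw [← h1] at hν
    have main : ∀ s : S, (s * ν) ⊗ₜ[R] y ∈ mm := by
      have hν' : ν ∈ Submodule.span S ((algebraMap R S) '' (IsLocalRing.maximalIdeal R)) := hν
      refine Submodule.span_induction ?_ ?_ ?_ ?_ hν'
      · rintro _ ⟨a, ha, rfl⟩ s
        have : s * algebraMap R S a = a • s := by
          rw [Algebra.smul_def, mul_comm]
        rw [this, ← smul_tmul']
        exact Submodule.smul_mem_smul ha Submodule.mem_top
      · intro s; rw [mul_zero, zero_tmul]; exact Submodule.zero_mem _
      · intro ν₁ ν₂ _ _ h₁ h₂ s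
        rw [mul_add, add_tmul]
        exact Submodule.add_mem _ (h₁ s) (h₂ s)
      · intro t ν' _ h s
        rw [smul_eq_mul, ← mul_assoc]
        exact h (s * t)
    simpa using main 1
  -- Claim A: approximation modulo m • ⊤
  have hA : ∀ t : S ⊗[R] X, ∃ x : X, t - (1:S) ⊗ₜ x ∈ mm := by
    intro t
    induction t using TensorProduct.induction_on with
    | zero => exact ⟨0, by simp⟩
    | tmul s y =>
      obtain ⟨r, hr⟩ := h2 s
      refine ⟨r • y, ?_⟩
      have heq : s ⊗ₜ[R] y - (1:S) ⊗ₜ (r • y) = (s - algebraMap R S r) ⊗ₜ[R] y := by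
        rw [tmul_smul, smul_tmul', sub_tmul]
        congr 2
        rw [Algebra.smul_def, mul_one]
      rw [heq]
      exact hnu _ hr y
    | add u v hu hv =>
      obtain ⟨xu, hxu⟩ := hu
      obtain ⟨xv, hxv⟩ := hv
      refine ⟨xu + xv, ?_⟩
      rw [tmul_add]
      have : u + v - ((1:S) ⊗ₜ xu + (1:S) ⊗ₜ xv)
          = (u - (1:S) ⊗ₜ xu) + (v - (1:S) ⊗ₜ xv) := by abel
      rw [this]
      exact Submodule.add_mem _ hxu hxv
  -- Claim B+C : kernel elements lie in m • ker μ
  have hBC : ∀ k : S ⊗[R] X, μ k = 0 → k ∈ (IsLocalRing.maximalIdeal R) • (LinearMap.ker μ) := by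
    intro k hk
    obtain ⟨x, hx⟩ := hA k
    -- first, k itself lies in mm
    have hμmem : μ (k - (1:S) ⊗ₜ x) ∈ (IsLocalRing.maximalIdeal R) • (⊤ : Submodule R X) := by
      have hmap : Submodule.map μ mm
          = (IsLocalRing.maximalIdeal R) • (Submodule.map μ ⊤) :=
        Submodule.map_smul'' _ _ _
      have : μ (k - (1:S) ⊗ₜ x) ∈ Submodule.map μ mm := ⟨_, hx, rfl⟩
      rw [hmap] at this
      exact Submodule.smul_mono le_rfl le_top this
    have hμval : μ (k - (1:S) ⊗ₜ x) = -x := by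
      rw [map_sub, hk, hμη, zero_sub]
    have hxmem : x ∈ (IsLocalRing.maximalIdeal R) • (⊤ : Submodule R X) := by
      rw [hμval] at hμmem
      simpa using Submodule.neg_mem _ hμmem
    have hηx : (1:S) ⊗ₜ[R] x ∈ mm := by
      have hmap : Submodule.map (TensorProduct.mk R S X 1)
            ((IsLocalRing.maximalIdeal R) • (⊤ : Submodule R X))
          = (IsLocalRing.maximalIdeal R)
            • (Submodule.map (TensorProduct.mk R S X 1) ⊤) :=
        Submodule.map_smul'' _ _ _
      have : (1:S) ⊗ₜ[R] x ∈ Submodule.map (TensorProduct.mk R S X 1)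
          ((IsLocalRing.maximalIdeal R) • (⊤ : Submodule R X)) := ⟨x, hxmem, rfl⟩
      rw [hmap] at this
      exact Submodule.smul_mono le_rfl le_top this
    have hkmm : k ∈ mm := by
      have : k = (k - (1:S) ⊗ₜ x) + (1:S) ⊗ₜ x := by abel
      rw [this]
      exact Submodule.add_mem _ hx hηx
    -- now push through ρ = id - η ∘ μ
    set ρ : S ⊗[R] X →ₗ[R] S ⊗[R] X :=
      LinearMap.id - (TensorProduct.mk R S X 1) ∘ₗ μ with hρdef
    have hρrange : Submodule.map ρ ⊤ ≤ LinearMap.ker μ := by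
      rintro _ ⟨t, -, rfl⟩
      rw [LinearMap.mem_ker]
      simp only [hρdef, LinearMap.sub_apply, LinearMap.id_apply, LinearMap.coe_comp,
        Function.comp_apply, TensorProduct.mk_apply, map_sub]
      rw [hμη, sub_self]
    have hρk : ρ k = k := by
      simp only [hρdef, LinearMap.sub_apply, LinearMap.id_apply, LinearMap.coe_comp,
        Function.comp_apply, TensorProduct.mk_apply, hk, map_zero]
      rw [sub_zero]
    have : k ∈ Submodule.map ρ mm := ⟨k, hkmm, hρk⟩
    rw [hmmdef, Submodule.map_smul''] at this
    exact Submodule.smul_mono le_rfl hρrange this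
  -- K ≤ n • K, Nakayama
  have hKle : K ≤ (IsLocalRing.maximalIdeal S) • K := by
    intro k hk
    have hk' : μ k = 0 := hk
    have hmem := hBC k hk'
    have hle : (IsLocalRing.maximalIdeal R) • (LinearMap.ker μ)
        ≤ ((IsLocalRing.maximalIdeal S) • K).restrictScalars R := by
      refine Submodule.smul_le.2 fun a ha u hu => ?_
      have hφa : algebraMap R S a ∈ IsLocalRing.maximalIdeal S :=
        h1 ▸ Ideal.mem_map_of_mem _ ha
      rw [Submodule.restrictScalars_mem, ← algebraMap_smul S a u]
      exact Submodule.smul_mem_smul hφa hu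
    exact hle hmem
  have hKbot : K = ⊥ :=
    Submodule.eq_bot_of_le_smul_of_le_jacobson_bot (IsLocalRing.maximalIdeal S) K
      (IsNoetherian.noetherian K) hKle (IsLocalRing.maximalIdeal_le_jacobson ⊥)
  have hμinj : Function.Injective μ := by
    intro u v huv
    have : u - v ∈ K := by
      show μ (u - v) = 0
      rw [map_sub, huv, sub_self]
    rw [hKbot] at this
    exact sub_eq_zero.mp this
  intro t
  refine ⟨μ t, hμinj ?_⟩
  rw [TensorProduct.mk_apply, hμη]

/-- If the natural map `X → S ⊗ X` is bijective, `X` has a compatible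
`S`-module structure. -/
lemma bijective_implies_compatible
    (hinj : Function.Injective (TensorProduct.mk R S X 1))
    (hsurj : Function.Surjective (TensorProduct.mk R S X 1)) :
    HasCompatibleSModule R S X := by
  let e : X ≃ₗ[R] S ⊗[R] X :=
    LinearEquiv.ofBijective (TensorProduct.mk R S X 1) ⟨hinj, hsurj⟩
  refine ⟨fun s x => e.symm (s • e x), ?_, ?_, ?_, ?_, ?_⟩
  · intro x
    show e.symm ((1:S) • e x) = x
    rw [one_smul, e.symm_apply_apply]
  · intro s t x
    show e.symm ((s * t) • e x) = e.symm (s • e (e.symm (t • e x)))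
    rw [e.apply_symm_apply, mul_smul]
  · intro s x y
    show e.symm (s • e (x + y)) = e.symm (s • e x) + e.symm (s • e y)
    rw [map_add, smul_add, map_add]
  · intro s t x
    show e.symm ((s + t) • e x) = e.symm (s • e x) + e.symm (t • e x)
    rw [add_smul, map_add]
  · intro r x
    show e.symm (algebraMap R S r • e x) = r • x
    rw [algebraMap_smul, map_smul, e.symm_apply_apply]

end Aux

theorem stmt_12 (R S : Type*) [CommRing R] [CommRing S]
    [IsNoetherianRing R] [IsNoetherianRing S] [IsLocalRing R] [IsLocalRing S]
    [Algebra R S] [Module.Flat R S] [IsLocalHom (algebraMap R S)]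
    (h1 : (IsLocalRing.maximalIdeal R).map (algebraMap R S) = IsLocalRing.maximalIdeal S)
    (h2 : ∀ s : S, ∃ r : R, s - algebraMap R S r ∈ IsLocalRing.maximalIdeal S)
    (M' M M'' : Type*) [AddCommGroup M'] [AddCommGroup M] [AddCommGroup M'']
    [Module R M'] [Module R M] [Module R M'']
    [Module.Finite R M'] [Module.Finite R M] [Module.Finite R M'']
    (f : M' →ₗ[R] M) (g : M →ₗ[R] M'')
    (hf : Function.Injective f) (hg : Function.Surjective g)
    (hexact : Function.Exact f g) :
    HasCompatibleSModule R S M ↔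
      (HasCompatibleSModule R S M' ∧ HasCompatibleSModule R S M'') := by
  have iM : Function.Injective (TensorProduct.mk R S M 1) := eta_injective
  have iM' : Function.Injective (TensorProduct.mk R S M' 1) := eta_injective
  have iM'' : Function.Injective (TensorProduct.mk R S M'' 1) := eta_injective
  have hFi : Function.Injective (LinearMap.lTensor S f) :=
    Module.Flat.lTensor_preserves_injective_linearMap f hf
  have hGs : Function.Surjective (LinearMap.lTensor S g) :=
    LinearMap.lTensor_surjective S hg
  have hEx : Function.Exact (LinearMap.lTensor S f) (LinearMap.lTensor S g) :=
    lTensor_exact S hexact hg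
  constructor
  · intro hM
    have sM : Function.Surjective (TensorProduct.mk R S M 1) :=
      compatible_implies_surjective h1 h2 hM
    have sM'' : Function.Surjective (TensorProduct.mk R S M'' 1) := by
      intro t
      obtain ⟨u, hu⟩ := hGs t
      obtain ⟨x, hx⟩ := sM u
      refine ⟨g x, ?_⟩
      rw [TensorProduct.mk_apply] at hx ⊢
      rw [← hu, ← hx, LinearMap.lTensor_tmul]
    have sM' : Function.Surjective (TensorProduct.mk R S M' 1) := by
      intro y
      obtain ⟨x, hx⟩ := sM (LinearMap.lTensor S f y)
      rw [TensorProduct.mk_apply] at hx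
      have hgx : g x = 0 := by
        apply iM''
        rw [TensorProduct.mk_apply, TensorProduct.mk_apply, TensorProduct.tmul_zero,
          ← LinearMap.lTensor_tmul S g, hx]
        exact hEx.apply_apply_eq_zero y
      obtain ⟨x', hx'⟩ := (hexact x).mp hgx
      refine ⟨x', hFi ?_⟩
      rw [TensorProduct.mk_apply, LinearMap.lTensor_tmul, hx', hx]
    exact ⟨bijective_implies_compatible iM' sM', bijective_implies_compatible iM'' sM''⟩
  · rintro ⟨hM', hM''⟩
    have sM' : Function.Surjective (TensorProduct.mk R S M' 1) :=
      compatible_implies_surjective h1 h2 hM'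
    have sM'' : Function.Surjective (TensorProduct.mk R S M'' 1) :=
      compatible_implies_surjective h1 h2 hM''
    have sM : Function.Surjective (TensorProduct.mk R S M 1) := by
      intro t
      obtain ⟨x'', hx''⟩ := sM'' (LinearMap.lTensor S g t)
      obtain ⟨x, hx⟩ := hg x''
      have hmem : t - (1:S) ⊗ₜ[R] x ∈ Set.range (LinearMap.lTensor S f) := by
        rw [← hEx (t - (1:S) ⊗ₜ[R] x)]
        rw [map_sub, LinearMap.lTensor_tmul, hx]
        rw [TensorProduct.mk_apply] at hx''
        rw [hx'', sub_self]
      obtain ⟨y', hy'⟩ := hmem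
      obtain ⟨x', hx'⟩ := sM' y'
      refine ⟨x + f x', ?_⟩
      rw [TensorProduct.mk_apply, TensorProduct.tmul_add]
      rw [TensorProduct.mk_apply] at hx'
      rw [← LinearMap.lTensor_tmul S f, hx', hy']
      abel
    exact bijective_implies_compatible iM sM
end
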